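/- arXiv:math/9402216 — 6 statements merged into one kernel-verified Lean document; each statement's English description precedes it below -/
import Mathlib

section
/- The multiplication law for brackets: [F₁(z)·F₂(z)] (G₁(z)·G₂(z)) = Σ_k ([F₁(z)·z^k] G₁(z)) · ([F₂(z)·z^{-k}] G₂(z)), where the sum over integers k has only finitely many nonzero terms. -/
/-- A formal Laurent series (as coefficient function): finitely many negative-power terms. -/
def IsLSeries {R : Type*} [CommRing R] (f : ℤ → R) : Prop :=
  ∃ N : ℤ, ∀ n < N, f n = 0

/-- A reverse formal Laurent series: finitely many positive-power terms. -/
def IsRSeries {R : Type*} [CommRing R] (f : ℤ → R) : Prop :=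
  ∃ N : ℤ, ∀ n > N, f n = 0

/-- The bracket `[F(z)] G(z) = Σₙ fₙ gₙ`. -/
noncomputable def bracket {R : Type*} [CommRing R] (f g : ℤ → R) : R :=
  ∑ᶠ n : ℤ, f n * g n

/-- Product of two series, coefficientwise: `(f·g)ₙ = Σⱼ fⱼ g_{n-j}`. -/
noncomputable def seriesMul {R : Type*} [CommRing R] (f g : ℤ → R) : ℤ → R :=
  fun n => ∑ᶠ j : ℤ, f j * g (n - j)

/-- The multiplication law:
`[F₁(z)F₂(z)] (G₁(z)G₂(z)) = Σₖ ([F₁(z)z^k] G₁(z)) · ([F₂(z)z^{-k}] G₂(z))`,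
where `F₁(z)·z^k` has coefficient function `n ↦ F₁(n - k)`. -/
theorem bracket_mul_law {R : Type*} [CommRing R] (F₁ F₂ G₁ G₂ : ℤ → R)
    (hF₁ : IsRSeries F₁) (hF₂ : IsRSeries F₂) (hG₁ : IsLSeries G₁) (hG₂ : IsLSeries G₂) :
    bracket (seriesMul F₁ F₂) (seriesMul G₁ G₂)
      = ∑ᶠ k : ℤ, bracket (fun n => F₁ (n - k)) G₁ * bracket (fun n => F₂ (n + k)) G₂ := by
  obtain ⟨N₁, hN₁⟩ := hF₁
  obtain ⟨N₂, hN₂⟩ := hF₂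
  obtain ⟨M₁, hM₁⟩ := hG₁
  obtain ⟨M₂, hM₂⟩ := hG₂
  -- Φ (N, j, i) = F₁ j · F₂ (N-j) · G₁ i · G₂ (N-i)
  set Φ : ℤ × ℤ × ℤ → R :=
    fun p => F₁ p.2.1 * F₂ (p.1 - p.2.1) * (G₁ p.2.2 * G₂ (p.1 - p.2.2)) with hΦdef
  have hΦfin : (Function.support Φ).Finite := by
    apply Set.Finite.subset
      (((Set.finite_Icc (M₁ + M₂) (N₁ + N₂)).prod
        (((Set.finite_Icc (M₁ + M₂ - N₂) N₁)).prod
          (Set.finite_Icc M₁ (N₁ + N₂ - M₂)))))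
    rintro ⟨N, j, i⟩ hp
    simp only [Function.mem_support, hΦdef] at hp
    have h1 : F₁ j ≠ 0 := fun h => hp (by simp [h])
    have h2 : F₂ (N - j) ≠ 0 := fun h => hp (by simp [h])
    have h3 : G₁ i ≠ 0 := fun h => hp (by simp [h])
    have h4 : G₂ (N - i) ≠ 0 := fun h => hp (by simp [h])
    have b1 : j ≤ N₁ := le_of_not_gt fun h => h1 (hN₁ j h)
    have b2 : N - j ≤ N₂ := le_of_not_gt fun h => h2 (hN₂ _ h)
    have b3 : M₁ ≤ i := le_of_not_gt fun h => h3 (hM₁ i h)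
    have b4 : M₂ ≤ N - i := le_of_not_gt fun h => h4 (hM₂ _ h)
    simp only [Set.mem_prod, Set.mem_Icc]
    omega
  -- finiteness of the slice supports
  have hfinF : ∀ N : ℤ, (Function.support fun j => F₁ j * F₂ (N - j)).Finite := by
    intro N
    apply Set.Finite.subset (Set.finite_Icc (N - N₂) N₁)
    intro j hj
    simp only [Function.mem_support] at hj
    have h1 : F₁ j ≠ 0 := fun h => hj (by simp [h])
    have h2 : F₂ (N - j) ≠ 0 := fun h => hj (by simp [h])
    have b1 : j ≤ N₁ := le_of_not_gt fun h => h1 (hN₁ j h)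
    have b2 : N - j ≤ N₂ := le_of_not_gt fun h => h2 (hN₂ _ h)
    simp only [Set.mem_Icc]; omega
  have hfinG : ∀ N : ℤ, (Function.support fun i => G₁ i * G₂ (N - i)).Finite := by
    intro N
    apply Set.Finite.subset (Set.finite_Icc M₁ (N - M₂))
    intro i hi
    simp only [Function.mem_support] at hi
    have h3 : G₁ i ≠ 0 := fun h => hi (by simp [h])
    have h4 : G₂ (N - i) ≠ 0 := fun h => hi (by simp [h])
    have b3 : M₁ ≤ i := le_of_not_gt fun h => h3 (hM₁ i h)
    have b4 : M₂ ≤ N - i := le_of_not_gt fun h => h4 (hM₂ _ h)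
    simp only [Set.mem_Icc]; omega
  -- LHS = ∑ᶠ p, Φ p
  have hL : bracket (seriesMul F₁ F₂) (seriesMul G₁ G₂) = ∑ᶠ p : ℤ × ℤ × ℤ, Φ p := by
    rw [finsum_curry₃ Φ hΦfin]
    simp only [bracket, seriesMul]
    refine finsum_congr fun N => ?_
    rw [finsum_mul' _ _ (hfinF N)]
    refine finsum_congr fun j => ?_
    rw [mul_finsum' _ _ (hfinG N)]
  -- the bijection (k, n, m) ↦ (n + m, n - k, n)
  set e : (ℤ × ℤ × ℤ) ≃ (ℤ × ℤ × ℤ) :=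
    { toFun := fun q => (q.2.1 + q.2.2, q.2.1 - q.1, q.2.1)
      invFun := fun p => (p.2.2 - p.2.1, p.2.2, p.1 - p.2.2)
      left_inv := by rintro ⟨k, n, m⟩; simp only [Prod.mk.injEq]; exact ⟨by omega, trivial, by omega⟩
      right_inv := by rintro ⟨N, j, i⟩; simp only [Prod.mk.injEq]; exact ⟨by omega, by omega, trivial⟩ } with hedef
  set Ψ : ℤ × ℤ × ℤ → R :=
    fun q => F₁ (q.2.1 - q.1) * G₁ q.2.1 * (F₂ (q.2.2 + q.1) * G₂ q.2.2) with hΨdef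
  have hΨΦ : ∀ q, Ψ q = Φ (e q) := by
    rintro ⟨k, n, m⟩
    simp only [hΨdef, hΦdef, hedef, Equiv.coe_fn_mk]
    have h1 : n + m - (n - k) = m + k := by ring
    have h2 : n + m - n = m := by ring
    rw [h1, h2]; ring
  have hΨfin : (Function.support Ψ).Finite := by
    have : Function.support Ψ = e ⁻¹' Function.support Φ := by
      ext q
      simp only [Function.mem_support, Set.mem_preimage, hΨΦ q]
    rw [this]
    exact hΦfin.preimage e.injective.injOn
  -- finiteness of the slice supports on the RHS
  have hfinF' : ∀ k : ℤ, (Function.support fun n => F₁ (n - k) * G₁ n).Finite := by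
    intro k
    apply Set.Finite.subset (Set.finite_Icc M₁ (N₁ + k))
    intro n hn
    simp only [Function.mem_support] at hn
    have h1 : F₁ (n - k) ≠ 0 := fun h => hn (by simp [h])
    have h3 : G₁ n ≠ 0 := fun h => hn (by simp [h])
    have b1 : n - k ≤ N₁ := le_of_not_gt fun h => h1 (hN₁ _ h)
    have b3 : M₁ ≤ n := le_of_not_gt fun h => h3 (hM₁ n h)
    simp only [Set.mem_Icc]; omega
  have hfinG' : ∀ k : ℤ, (Function.support fun m => F₂ (m + k) * G₂ m).Finite := by
    intro k
    apply Set.Finite.subset (Set.finite_Icc M₂ (N₂ - k))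
    intro m hm
    simp only [Function.mem_support] at hm
    have h2 : F₂ (m + k) ≠ 0 := fun h => hm (by simp [h])
    have h4 : G₂ m ≠ 0 := fun h => hm (by simp [h])
    have b2 : m + k ≤ N₂ := le_of_not_gt fun h => h2 (hN₂ _ h)
    have b4 : M₂ ≤ m := le_of_not_gt fun h => h4 (hM₂ m h)
    simp only [Set.mem_Icc]; omega
  -- RHS = ∑ᶠ q, Ψ q
  have hR : (∑ᶠ k : ℤ, bracket (fun n => F₁ (n - k)) G₁ * bracket (fun n => F₂ (n + k)) G₂)
      = ∑ᶠ q : ℤ × ℤ × ℤ, Ψ q := by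
    rw [finsum_curry₃ Ψ hΨfin]
    simp only [bracket]
    refine finsum_congr fun k => ?_
    rw [finsum_mul' _ _ (hfinF' k)]
    refine finsum_congr fun n => ?_
    rw [mul_finsum' _ _ (hfinG' k)]
  rw [hL, hR]
  calc ∑ᶠ p : ℤ × ℤ × ℤ, Φ p = ∑ᶠ q : ℤ × ℤ × ℤ, Φ (e q) := (finsum_comp_equiv e).symm
    _ = ∑ᶠ q : ℤ × ℤ × ℤ, Ψ q := finsum_congr fun q => (hΨΦ q).symm
end

section
/- Saalschütz-type binomial identity: for nonnegative integers k, l, m, n, Σ_r C(m, k-r)·C(n, l-r)·C(m+n+r, r) = C(m+l, k)·C(n+k, l). -/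
open Finset

namespace SaalAux

/-- The sum in the Saalschütz-type identity. -/
def S (k l m n : ℕ) : ℕ :=
  ∑ r ∈ Finset.range (min k l + 1),
      m.choose (k - r) * n.choose (l - r) * (m + n + r).choose r

/-- Guarded telescoping certificate. -/
def Gc (k l m n : ℕ) : ℕ → ℕ
  | 0 => 0
  | (t+1) => if t ≤ min k l then m.choose (k-t) * n.choose (l-t) * (m+n+1+t).choose t else 0

/-- Shifted term of `S k l (m+1) (n+1)`. -/
def Eb (k l m n : ℕ) : ℕ → ℕ
  | 0 => 0
  | (t+1) => (m+1).choose (k-t) * (n+1).choose (l-t) * (m+1+(n+1)+t).choose t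

lemma term_id (k l m n : ℕ) (r : ℕ) (hr : r ≤ min k l + 1) :
    (m+1).choose (k+1-r) * (n+1).choose (l+1-r) * (m+1+(n+1)+r).choose r
      + m.choose (k+1-r) * n.choose (l+1-r) * (m+n+r).choose r
      + Gc k l m n r
    = (m+1).choose (k+1-r) * n.choose (l+1-r) * (m+1+n+r).choose r
      + m.choose (k+1-r) * (n+1).choose (l+1-r) * (m+(n+1)+r).choose r
      + Eb k l m n r
      + Gc k l m n (r+1) := by
  match r with
  | 0 =>
      simp only [Gc, Eb, Nat.sub_zero, Nat.add_zero, Nat.choose_zero_right, mul_one]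
      rw [if_pos (Nat.zero_le _)]
      rw [Nat.choose_succ_succ' m k, Nat.choose_succ_succ' n l]
      ring
  | (t+1) =>
      have ht : t ≤ min k l := by omega
      by_cases hk : t + 1 ≤ k
      · by_cases hl : t + 1 ≤ l
        · -- interior case
          obtain ⟨a, rfl⟩ : ∃ a, k = a + (t+1) := ⟨k - (t+1), by omega⟩
          obtain ⟨b, rfl⟩ : ∃ b, l = b + (t+1) := ⟨l - (t+1), by omega⟩
          simp only [Gc, Eb]
          rw [if_pos (by omega : t ≤ min (a+(t+1)) (b+(t+1))),
              if_pos (by omega : t+1 ≤ min (a+(t+1)) (b+(t+1)))]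
          rw [show a+(t+1)+1-(t+1) = a+1 by omega, show b+(t+1)+1-(t+1) = b+1 by omega,
              show a+(t+1)-t = a+1 by omega, show b+(t+1)-t = b+1 by omega,
              show a+(t+1)-(t+1) = a by omega, show b+(t+1)-(t+1) = b by omega]
          rw [show m+1+(n+1)+(t+1) = (m+n+t+2)+1 by omega]
          rw [Nat.choose_succ_succ' (m+n+t+2) t]
          rw [show m+n+t+2 = (m+n+t+1)+1 by omega]
          rw [show m+1+n+(t+1) = (m+n+t+1)+1 by omega,
              show m+(n+1)+(t+1) = (m+n+t+1)+1 by omega,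
              show m+n+1+(t+1) = (m+n+t+1)+1 by omega,
              show m+n+(t+1) = m+n+t+1 by omega,
              show m+n+1+t = m+n+t+1 by omega,
              show m+1+(n+1)+t = (m+n+t+1)+1 by omega]
          rw [Nat.choose_succ_succ' (m+n+t+1) t]
          rw [Nat.choose_succ_succ' m a, Nat.choose_succ_succ' n b]
          ring
        · -- top boundary: t = l, l + 1 ≤ k
          obtain rfl : l = t := by omega
          obtain ⟨a, rfl⟩ : ∃ a, k = a + (l+1) := ⟨k - (l+1), by omega⟩
          simp only [Gc, Eb]
          rw [if_pos (by omega : l ≤ min (a+(l+1)) l), if_neg (by omega : ¬ l+1 ≤ min (a+(l+1)) l)]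
          rw [show a+(l+1)+1-(l+1) = a+1 by omega, show l+1-(l+1) = 0 by omega,
              show a+(l+1)-l = a+1 by omega, show l-l = 0 by omega]
          rw [show m+1+(n+1)+(l+1) = (m+n+l+2)+1 by omega]
          rw [Nat.choose_succ_succ' (m+n+l+2) l]
          rw [show m+n+l+2 = (m+n+l+1)+1 by omega]
          rw [show m+1+n+(l+1) = (m+n+l+1)+1 by omega,
              show m+(n+1)+(l+1) = (m+n+l+1)+1 by omega,
              show m+n+(l+1) = m+n+l+1 by omega,
              show m+n+1+l = m+n+l+1 by omega,
              show m+1+(n+1)+l = (m+n+l+1)+1 by omega]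
          rw [Nat.choose_succ_succ' (m+n+l+1) l]
          simp only [Nat.choose_zero_right, mul_one, one_mul]
          ring
      · -- top boundary: t = k, k ≤ l
        obtain rfl : k = t := by omega
        obtain ⟨b, rfl⟩ : ∃ b, l = b + k := ⟨l - k, by omega⟩
        simp only [Gc, Eb]
        rw [if_pos (by omega : k ≤ min k (b+k)), if_neg (by omega : ¬ k+1 ≤ min k (b+k))]
        rw [show k+1-(k+1) = 0 by omega, show b+k+1-(k+1) = b by omega,
            show k-k = 0 by omega, show b+k-k = b by omega]
        rw [show m+1+(n+1)+(k+1) = (m+n+k+2)+1 by omega]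
        rw [Nat.choose_succ_succ' (m+n+k+2) k]
        rw [show m+n+k+2 = (m+n+k+1)+1 by omega]
        rw [show m+1+n+(k+1) = (m+n+k+1)+1 by omega,
            show m+(n+1)+(k+1) = (m+n+k+1)+1 by omega,
            show m+n+(k+1) = m+n+k+1 by omega,
            show m+n+1+k = m+n+k+1 by omega,
            show m+1+(n+1)+k = (m+n+k+1)+1 by omega]
        rw [Nat.choose_succ_succ' (m+n+k+1) k]
        simp only [Nat.choose_zero_right, mul_one, one_mul]
        ring

lemma S_rec (k l m n : ℕ) :
    S (k+1) (l+1) (m+1) (n+1) + S (k+1) (l+1) m n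
    = S (k+1) (l+1) (m+1) n + S (k+1) (l+1) m (n+1) + S k l (m+1) (n+1) := by
  have key : ∑ r ∈ range (min k l + 1 + 1),
      ((m+1).choose (k+1-r) * (n+1).choose (l+1-r) * (m+1+(n+1)+r).choose r
        + m.choose (k+1-r) * n.choose (l+1-r) * (m+n+r).choose r
        + Gc k l m n r)
    = ∑ r ∈ range (min k l + 1 + 1),
      ((m+1).choose (k+1-r) * n.choose (l+1-r) * (m+1+n+r).choose r
        + m.choose (k+1-r) * (n+1).choose (l+1-r) * (m+(n+1)+r).choose r
        + Eb k l m n r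
        + Gc k l m n (r+1)) :=
    Finset.sum_congr rfl fun r hr =>
      term_id k l m n r (by have := Finset.mem_range.mp hr; omega)
  have hG0 : Gc k l m n 0 = 0 := rfl
  have hGtop : Gc k l m n (min k l + 1 + 1) = 0 := by
    simp only [Gc]
    rw [if_neg (by omega)]
  have h1 : ∑ r ∈ range (min k l + 1 + 1 + 1), Gc k l m n r
      = ∑ r ∈ range (min k l + 1 + 1), Gc k l m n (r+1) + Gc k l m n 0 :=
    Finset.sum_range_succ' _ _
  have h2 : ∑ r ∈ range (min k l + 1 + 1 + 1), Gc k l m n r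
      = ∑ r ∈ range (min k l + 1 + 1), Gc k l m n r + Gc k l m n (min k l + 1 + 1) :=
    Finset.sum_range_succ _ _
  have hE : ∑ r ∈ range (min k l + 1 + 1), Eb k l m n r
      = ∑ r ∈ range (min k l + 1),
          (m+1).choose (k-r) * (n+1).choose (l-r) * (m+1+(n+1)+r).choose r := by
    rw [Finset.sum_range_succ' (Eb k l m n) (min k l + 1)]
    simp [Eb]
  rw [Finset.sum_add_distrib, Finset.sum_add_distrib, Finset.sum_add_distrib,
      Finset.sum_add_distrib, Finset.sum_add_distrib] at key
  simp only [S]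
  rw [show min (k+1) (l+1) = min k l + 1 by omega]
  omega

lemma g_rec (k l m n : ℕ) :
    (m+1+(l+1)).choose (k+1) * (n+1+(k+1)).choose (l+1)
      + (m+(l+1)).choose (k+1) * (n+(k+1)).choose (l+1)
    = (m+1+(l+1)).choose (k+1) * (n+(k+1)).choose (l+1)
      + (m+(l+1)).choose (k+1) * (n+1+(k+1)).choose (l+1)
      + (m+1+l).choose k * (n+1+k).choose l := by
  rw [show m+1+(l+1) = (m+l+1)+1 by omega, show n+1+(k+1) = (n+k+1)+1 by omega,
      show m+(l+1) = m+l+1 by omega, show n+(k+1) = n+k+1 by omega,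
      show m+1+l = m+l+1 by omega, show n+1+k = n+k+1 by omega]
  rw [Nat.choose_succ_succ' (m+l+1) k, Nat.choose_succ_succ' (n+k+1) l]
  ring

lemma main : ∀ fuel k l m n, k + l + m + n ≤ fuel →
    S k l m n = (m + l).choose k * (n + k).choose l := by
  intro fuel
  induction fuel with
  | zero =>
      intro k l m n h
      obtain rfl : k = 0 := by omega
      obtain rfl : l = 0 := by omega
      obtain rfl : m = 0 := by omega
      obtain rfl : n = 0 := by omega
      simp [S]
  | succ fuel ih =>
      intro k l m n h
      match k, l, m, n with
      | 0, l, m, n => simp [S]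
      | k+1, 0, m, n => simp [S]
      | k+1, l+1, 0, n =>
          simp only [S]
          rw [show min (k+1) (l+1) = min k l + 1 by omega]
          by_cases hkl : k ≤ l
          · rw [show min k l = k from by omega]
            rw [Finset.sum_range_succ]
            rw [Finset.sum_eq_zero (fun r hr => by
              have := Finset.mem_range.mp hr
              rw [show k+1-r = (k-r)+1 by omega, Nat.choose_zero_succ]
              ring)]
            rw [show k+1-(k+1) = 0 by omega]
            simp only [Nat.choose_zero_right, Nat.zero_add, zero_add, one_mul]
            rw [show l+1-(k+1) = l-k by omega]
            by_cases hln : l ≤ n + k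
            · have hc := Nat.choose_mul (n := n+k+1) (show k+1 ≤ l+1 by omega)
              rw [show n+k+1-(k+1) = n by omega, show l+1-(k+1) = l-k by omega] at hc
              rw [show n+(k+1) = n+k+1 by omega]
              calc n.choose (l-k) * (n+k+1).choose (k+1)
                  = (n+k+1).choose (k+1) * n.choose (l-k) := by ring
                _ = (n+k+1).choose (l+1) * (l+1).choose (k+1) := hc.symm
                _ = (l+1).choose (k+1) * (n+k+1).choose (l+1) := by ring
            · rw [Nat.choose_eq_zero_of_lt (show n < l-k by omega)]
              rw [show n+(k+1) = n+k+1 by omega,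
                  Nat.choose_eq_zero_of_lt (show n+k+1 < l+1 by omega)]
              simp
          · rw [show min k l = l from by omega]
            rw [Finset.sum_eq_zero (fun r hr => by
              have := Finset.mem_range.mp hr
              rw [show k+1-r = (k-r)+1 by omega, Nat.choose_zero_succ]
              ring)]
            rw [show (0:ℕ)+(l+1) = l+1 by omega,
                Nat.choose_eq_zero_of_lt (show l+1 < k+1 by omega)]
            simp
      | k+1, l+1, m+1, 0 =>
          simp only [S]
          rw [show min (k+1) (l+1) = min k l + 1 by omega]
          by_cases hkl : l ≤ k
          · rw [show min k l = l from by omega]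
            rw [Finset.sum_range_succ]
            rw [Finset.sum_eq_zero (fun r hr => by
              have := Finset.mem_range.mp hr
              rw [show l+1-r = (l-r)+1 by omega, Nat.choose_zero_succ]
              ring)]
            rw [show l+1-(l+1) = 0 by omega]
            simp only [Nat.choose_zero_right, Nat.add_zero, zero_add, mul_one]
            rw [show k+1-(l+1) = k-l by omega]
            by_cases hkm : k ≤ m + l + 1
            · have hc := Nat.choose_mul (n := m+l+2) (show l+1 ≤ k+1 by omega)
              rw [show m+l+2-(l+1) = m+1 by omega, show k+1-(l+1) = k-l by omega] at hc
              rw [show m+1+0+(l+1) = m+l+2 by omega]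
              linarith [hc]
            · rw [Nat.choose_eq_zero_of_lt (show m+1 < k-l by omega)]
              rw [show m+1+(l+1) = m+l+2 by omega,
                  Nat.choose_eq_zero_of_lt (show m+l+2 < k+1 by omega)]
              simp
          · rw [show min k l = k from by omega]
            rw [Finset.sum_eq_zero (fun r hr => by
              have := Finset.mem_range.mp hr
              rw [show l+1-r = (l-r)+1 by omega, Nat.choose_zero_succ]
              ring)]
            rw [show (0:ℕ)+(k+1) = k+1 by omega,
                Nat.choose_eq_zero_of_lt (show k+1 < l+1 by omega)]
            simp
      | k+1, l+1, m+1, n+1 =>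
          have h1 := S_rec k l m n
          rw [ih (k+1) (l+1) (m+1) n (by omega), ih (k+1) (l+1) m (n+1) (by omega),
              ih k l (m+1) (n+1) (by omega), ih (k+1) (l+1) m n (by omega)] at h1
          have h2 := g_rec k l m n
          have h3 := h1.trans h2.symm
          exact Nat.add_right_cancel h3

end SaalAux

/-- Saalschütz-type binomial identity:
`Σ_r C(m, k-r)·C(n, l-r)·C(m+n+r, r) = C(m+l, k)·C(n+k, l)`.
The sum over all integers `r` has nonzero terms only for `0 ≤ r ≤ min k l`. -/
theorem saalschuetz_type (k l m n : ℕ) :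
    ∑ r ∈ Finset.range (min k l + 1),
      m.choose (k - r) * n.choose (l - r) * (m + n + r).choose r
    = (m + l).choose k * (n + k).choose l := by
  exact SaalAux.main (k + l + m + n) k l m n le_rfl
end

section
/- Coefficient of a power of a difference over a power of (1-wz): for nonnegative integers l, m, n, [w^{l+n} z^{m+n}] ((w-z)^{l+m} / (1-wz)^{l+m+1}) = (-1)^m (l+m+n)!/(l!·m!·n!). -/
open PowerSeries

open Finset in
lemma coeff_sub_pow (N i : ℕ) :
    PowerSeries.coeff (R := PowerSeries ℚ) i
      ((PowerSeries.X - PowerSeries.C (R := PowerSeries ℚ) PowerSeries.X) ^ N)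
    = if i ≤ N then ((-1 : PowerSeries ℚ) ^ (i + N) * (N.choose i : PowerSeries ℚ))
        * PowerSeries.X ^ (N - i) else 0 := by
  rw [sub_pow, map_sum]
  have hterm : ∀ j ∈ range (N + 1),
      PowerSeries.coeff (R := PowerSeries ℚ) i
        ((-1) ^ (j + N) * PowerSeries.X ^ j
          * (PowerSeries.C (R := PowerSeries ℚ) PowerSeries.X) ^ (N - j) * ((N.choose j : ℕ) : (PowerSeries ℚ)⟦X⟧))
      = if i = j then ((-1 : PowerSeries ℚ) ^ (j + N) * (N.choose j : PowerSeries ℚ))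
          * PowerSeries.X ^ (N - j) else 0 := by
    intro j hj
    have : ((-1 : (PowerSeries ℚ)⟦X⟧) ^ (j + N) * PowerSeries.X ^ j
        * (PowerSeries.C (R := PowerSeries ℚ) PowerSeries.X) ^ (N - j) * ((N.choose j : ℕ) : (PowerSeries ℚ)⟦X⟧))
        = PowerSeries.C (R := PowerSeries ℚ)
            ((-1) ^ (j + N) * (N.choose j : PowerSeries ℚ) * PowerSeries.X ^ (N - j))
          * PowerSeries.X ^ j := by
      rw [map_mul, map_mul, map_pow, map_pow, map_neg, map_one, map_natCast]
      ring
    rw [this, PowerSeries.coeff_C_mul, PowerSeries.coeff_X_pow]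
    split <;> ring
  rw [Finset.sum_congr rfl hterm]
  by_cases h : i ≤ N
  · rw [Finset.sum_eq_single i (fun b _ hb => if_neg (Ne.symm hb))
      (fun h' => absurd (mem_range.2 (by omega)) h'), if_pos rfl, if_pos h]
  · rw [if_neg h]
    apply Finset.sum_eq_zero
    intro j hj
    rw [if_neg]
    rw [mem_range] at hj; omega

/-- Coefficient extraction from `(w-z)^{l+m}/(1-wz)^{l+m+1}`, viewed as a power series
in `w` over `ℚ⟦z⟧` (so `w` is the outer `X` and `z` the inner `X`), where
`1/(1-wz)^{l+m+1} = Σ_{k≥0} C(l+m+k, k) w^k z^k`: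
`[w^{l+n} z^{m+n}] ((w-z)^{l+m}/(1-wz)^{l+m+1}) = (-1)^m (l+m+n)!/(l!·m!·n!)`. -/
theorem coeff_diff_pow_div (l m n : ℕ) :
    PowerSeries.coeff (R := ℚ) (m + n) (PowerSeries.coeff (R := PowerSeries ℚ) (l + n)
      ((PowerSeries.X - PowerSeries.C (R := PowerSeries ℚ) PowerSeries.X) ^ (l + m)
        * PowerSeries.mk fun k => (((l + m + k).choose k : ℚ)) • PowerSeries.X ^ k))
      = (-1) ^ m * (l + m + n).factorial / (l.factorial * m.factorial * n.factorial) := by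

  rw [PowerSeries.coeff_mul, map_sum]
  rw [Finset.sum_eq_single (l, n)]
  · rw [coeff_sub_pow, if_pos (by omega), PowerSeries.coeff_mk]
    have h1 : l + m - l = m := by omega
    rw [h1]
    have : ((-1 : PowerSeries ℚ) ^ (l + (l + m)) * ((l + m).choose l : PowerSeries ℚ))
        * PowerSeries.X ^ m * (((l + m + n).choose n : ℚ) • PowerSeries.X ^ n)
        = PowerSeries.C (R := ℚ) ((-1) ^ (l + (l + m)) * ((l + m).choose l : ℚ)
            * ((l + m + n).choose n : ℚ)) * PowerSeries.X ^ (m + n) := by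
      rw [map_mul, map_mul, map_pow, map_neg, map_one, map_natCast, map_natCast, pow_add]
      rw [PowerSeries.smul_eq_C_mul]
      simp only [map_natCast]
      ring
    rw [this, PowerSeries.coeff_C_mul, PowerSeries.coeff_X_pow, if_pos rfl, mul_one]
    have hsign : ((-1 : ℚ)) ^ (l + (l + m)) = (-1) ^ m := by
      rw [show l + (l + m) = 2 * l + m by ring, pow_add, pow_mul]
      simp
    rw [hsign]
    have hfac : ((l + m).choose l) * ((l + m + n).choose n)
        * (l.factorial * m.factorial * n.factorial) = (l + m + n).factorial := by
      have h2 : (l + m).choose l * l.factorial * m.factorial = (l + m).factorial := by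
        have := Nat.add_choose_mul_factorial_mul_factorial m l
        rw [Nat.add_comm m l] at this
        linarith [this]
      have h3 : (l + m + n).choose n * (l + m).factorial * n.factorial
          = (l + m + n).factorial := by
        rw [Nat.add_choose_mul_factorial_mul_factorial]
      calc ((l + m).choose l) * ((l + m + n).choose n)
            * (l.factorial * m.factorial * n.factorial)
          = (l + m + n).choose n * ((l + m).choose l * l.factorial * m.factorial)
            * n.factorial := by ring
        _ = _ := by rw [h2, h3]
    have hpos : (l.factorial * m.factorial * n.factorial : ℚ) ≠ 0 := by
      positivity
    field_simp
    rw [mul_assoc]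
    push_cast [← hfac]
    ring
  · rintro ⟨a, b⟩ hab hne
    rw [Finset.HasAntidiagonal.mem_antidiagonal] at hab
    rw [coeff_sub_pow, PowerSeries.coeff_mk]
    by_cases h : a ≤ l + m
    · rw [if_pos h]
      have : ((-1 : PowerSeries ℚ) ^ (a + (l + m)) * ((l + m).choose a : PowerSeries ℚ))
          * PowerSeries.X ^ (l + m - a) * (((l + m + b).choose b : ℚ) • PowerSeries.X ^ b)
          = PowerSeries.C (R := ℚ) ((-1) ^ (a + (l + m)) * ((l + m).choose a : ℚ)
              * ((l + m + b).choose b : ℚ)) * PowerSeries.X ^ (l + m - a + b) := by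
        rw [map_mul, map_mul, map_pow, map_neg, map_one, map_natCast, map_natCast, pow_add]
        rw [PowerSeries.smul_eq_C_mul]
        simp only [map_natCast]
        ring
      rw [this, PowerSeries.coeff_C_mul, PowerSeries.coeff_X_pow, if_neg, mul_zero]
      intro hc
      apply hne
      have : a = l ∧ b = n := by omega
      simp [this.1, this.2, Prod.ext_iff]
    · rw [if_neg h, zero_mul, map_zero]
  · intro h
    simp at h
end

section
/- Lagrange inversion in bracket form: let F(z) = f₁z + f₂z² + ··· be a formal power series with zero constant term and f₁ invertible, and let G be its compositional inverse, so F(G(z)) = G(F(z)) = z. Then for all integers m and n: n·[z^n] G(z)^m = m·[z^{-m}] F(z)^{-n}. -/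
/-- Composition `G ∘ F` of formal power series (substituting `F`, with zero constant term,
into `G`): the coefficient of `z^n` is `Σ_{k ≤ n} ([z^k]G)·[z^n](F^k)`. -/
noncomputable def psComp {K : Type*} [CommRing K] (G F : PowerSeries K) : PowerSeries K :=
  PowerSeries.mk fun n =>
    ∑ k ∈ Finset.range (n + 1), PowerSeries.coeff k G * PowerSeries.coeff n (F ^ k)

namespace LagrangeAux

open PowerSeries HahnSeries

section CommRing
variable {K : Type*} [CommRing K]


variable {K : Type*} [CommRing K]

lemma coeff_pow_eq_zero {F : PowerSeries K} (hF : constantCoeff F = 0)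
    {k p : ℕ} (h : p < k) : coeff p (F ^ k) = 0 := by
  have hd : (X : PowerSeries K) ^ k ∣ F ^ k := pow_dvd_pow_of_dvd (X_dvd_iff.2 hF) k
  obtain ⟨C, hC⟩ := hd
  rw [hC, PowerSeries.coeff_X_pow_mul' C k p, if_neg (by omega)]

lemma psComp_coeff (G F : PowerSeries K) (n : ℕ) :
    coeff n (psComp G F) =
      ∑ k ∈ Finset.range (n + 1), coeff k G * coeff n (F ^ k) := by
  simp [psComp]

lemma psComp_coeff_ext {G F : PowerSeries K} (hF : constantCoeff F = 0) (n : ℕ) {N : ℕ}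
    (hN : n < N) :
    coeff n (psComp G F) = ∑ k ∈ Finset.range N, coeff k G * coeff n (F ^ k) := by
  rw [psComp_coeff]
  refine Finset.sum_subset (by intro k hk; simp at *; omega) ?_
  intro k hk hk2
  simp only [Finset.mem_range, not_lt] at hk2
  rw [coeff_pow_eq_zero hF (by omega), mul_zero]

lemma psComp_one (F : PowerSeries K) : psComp 1 F = 1 := by
  ext n
  rw [psComp_coeff]
  rw [Finset.sum_eq_single 0 (fun k _ hk0 => by
        rw [PowerSeries.coeff_one, if_neg hk0, zero_mul])
      (fun h => absurd (Finset.mem_range.2 (by omega)) h)]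
  simp

lemma psComp_X {F : PowerSeries K} (hF : constantCoeff F = 0) : psComp X F = F := by
  ext n
  rcases Nat.eq_zero_or_pos n with rfl | hn
  · rw [psComp_coeff]
    simp [PowerSeries.coeff_zero_eq_constantCoeff, hF]
  · rw [psComp_coeff_ext hF n (show n < n + 1 by omega), Finset.sum_eq_single 1]
    · simp
    · intro k hk hk1
      rw [PowerSeries.coeff_X, if_neg hk1, zero_mul]
    · intro h; simp at h; omega

lemma psComp_add (G₁ G₂ F : PowerSeries K) :
    psComp (G₁ + G₂) F = psComp G₁ F + psComp G₂ F := by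
  ext n
  simp [psComp_coeff, add_mul, Finset.sum_add_distrib]

lemma psComp_mul {F : PowerSeries K} (hF : constantCoeff F = 0) (P Q : PowerSeries K) :
    psComp (P * Q) F = psComp P F * psComp Q F := by
  ext n
  have key : ∀ i j : ℕ, coeff n (F ^ i * F ^ j) = coeff n (F ^ (i + j)) := by
    intro i j; rw [← _root_.pow_add]
  rw [PowerSeries.coeff_mul]
  -- RHS
  have hR : ∑ pq ∈ Finset.HasAntidiagonal.antidiagonal n, coeff pq.1 (psComp P F) * coeff pq.2 (psComp Q F)
      = ∑ pq ∈ Finset.HasAntidiagonal.antidiagonal n, ∑ i ∈ Finset.range (n+1), ∑ j ∈ Finset.range (n+1),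
          (coeff i P * coeff j Q) * (coeff pq.1 (F ^ i) * coeff pq.2 (F ^ j)) := by
    refine Finset.sum_congr rfl fun pq hpq => ?_
    rw [Finset.HasAntidiagonal.mem_antidiagonal] at hpq
    rw [psComp_coeff_ext hF pq.1 (show pq.1 < n + 1 by omega),
      psComp_coeff_ext hF pq.2 (show pq.2 < n + 1 by omega), Finset.sum_mul_sum]
    refine Finset.sum_congr rfl fun i _ => Finset.sum_congr rfl fun j _ => by ring
  rw [hR, Finset.sum_comm]
  have hR2 : ∑ i ∈ Finset.range (n+1), ∑ pq ∈ Finset.HasAntidiagonal.antidiagonal n, ∑ j ∈ Finset.range (n+1),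
          (coeff i P * coeff j Q) * (coeff pq.1 (F ^ i) * coeff pq.2 (F ^ j))
      = ∑ i ∈ Finset.range (n+1), ∑ j ∈ Finset.range (n+1),
          (coeff i P * coeff j Q) * coeff n (F ^ (i+j)) := by
    refine Finset.sum_congr rfl fun i _ => ?_
    rw [Finset.sum_comm]
    refine Finset.sum_congr rfl fun j _ => ?_
    rw [← key, PowerSeries.coeff_mul, Finset.mul_sum]
  rw [hR2]
  -- LHS
  rw [psComp_coeff]
  have hL : ∑ k ∈ Finset.range (n + 1), coeff k (P * Q) * coeff n (F ^ k)
      = ∑ k ∈ Finset.range (n + 1), ∑ ij ∈ Finset.HasAntidiagonal.antidiagonal k,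
          (coeff ij.1 P * coeff ij.2 Q) * coeff n (F ^ (ij.1 + ij.2)) := by
    refine Finset.sum_congr rfl fun k hk => ?_
    rw [PowerSeries.coeff_mul, Finset.sum_mul]
    refine Finset.sum_congr rfl fun ij hij => ?_
    rw [Finset.HasAntidiagonal.mem_antidiagonal] at hij
    rw [hij]
  rw [hL]
  -- now identify double sums
  have hshrink : ∑ i ∈ Finset.range (n+1), ∑ j ∈ Finset.range (n+1),
        (coeff i P * coeff j Q) * coeff n (F ^ (i+j))
      = ∑ p ∈ (Finset.range (n+1) ×ˢ Finset.range (n+1)).filter (fun p => p.1 + p.2 ≤ n),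
        (coeff p.1 P * coeff p.2 Q) * coeff n (F ^ (p.1+p.2)) := by
    rw [← Finset.sum_product']
    refine (Finset.sum_subset (Finset.filter_subset _ _) ?_).symm
    intro p hp hp2
    simp only [Finset.mem_filter, hp, true_and, not_le] at hp2
    rw [coeff_pow_eq_zero hF hp2, mul_zero]
  rw [hshrink, Finset.sum_sigma']
  refine Finset.sum_nbij' (fun s => (s.2.1, s.2.2)) (fun p => ⟨p.1 + p.2, (p.1, p.2)⟩) ?_ ?_ ?_ ?_ ?_
  · rintro ⟨k, i, j⟩ hs
    simp only [Finset.mem_sigma, Finset.mem_range, Finset.HasAntidiagonal.mem_antidiagonal] at hs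
    simp only [Finset.mem_filter, Finset.mem_product, Finset.mem_range]
    refine ⟨⟨by omega, by omega⟩, by omega⟩
  · rintro ⟨i, j⟩ hp
    simp only [Finset.mem_filter, Finset.mem_product, Finset.mem_range] at hp
    simp only [Finset.mem_sigma, Finset.mem_range, Finset.HasAntidiagonal.mem_antidiagonal]
    exact ⟨by omega, trivial⟩
  · rintro ⟨k, i, j⟩ hs
    simp only [Finset.mem_sigma, Finset.mem_range, Finset.HasAntidiagonal.mem_antidiagonal] at hs
    simp only [Sigma.mk.inj_iff, heq_eq_eq]
    exact ⟨hs.2, trivial⟩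
  · rintro ⟨i, j⟩ hp; rfl
  · rintro ⟨k, i, j⟩ hs; rfl
lemma psComp_zero (F : PowerSeries K) : psComp 0 F = 0 := by
  have := psComp_add 0 0 F
  simp only [add_zero] at this
  exact left_eq_add.mp this

/-- `psComp · F` as a ring hom. -/
noncomputable def psCompHom (F : PowerSeries K) (hF : constantCoeff F = 0) :
    PowerSeries K →+* PowerSeries K where
  toFun P := psComp P F
  map_one' := psComp_one F
  map_mul' P Q := psComp_mul hF P Q
  map_zero' := psComp_zero F
  map_add' P Q := psComp_add P Q F

@[simp] lemma psCompHom_apply (F : PowerSeries K) (hF : constantCoeff F = 0)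
    (P : PowerSeries K) : psCompHom F hF P = psComp P F := rfl

/-- coefficient of a product with a composition. -/
lemma coeff_mul_psComp {F : PowerSeries K} (hF : constantCoeff F = 0)
    (B Q : PowerSeries K) (s : ℕ) :
    coeff s (B * psComp Q F)
      = ∑ i ∈ Finset.range (s + 1), coeff i Q * coeff s (B * F ^ i) := by
  rw [PowerSeries.coeff_mul]
  have h1 : ∑ pq ∈ Finset.HasAntidiagonal.antidiagonal s, coeff pq.1 B * coeff pq.2 (psComp Q F)
      = ∑ pq ∈ Finset.HasAntidiagonal.antidiagonal s, ∑ i ∈ Finset.range (s+1),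
          coeff i Q * (coeff pq.1 B * coeff pq.2 (F ^ i)) := by
    refine Finset.sum_congr rfl fun pq hpq => ?_
    rw [Finset.HasAntidiagonal.mem_antidiagonal] at hpq
    rw [psComp_coeff_ext hF pq.2 (show pq.2 < s + 1 by omega), Finset.mul_sum]
    refine Finset.sum_congr rfl fun i _ => by ring
  rw [h1, Finset.sum_comm]
  refine Finset.sum_congr rfl fun i _ => ?_
  rw [PowerSeries.coeff_mul, Finset.mul_sum]

section Star

/-- step A : the key identity over a char-zero domain. -/
lemma star_charzero {R : Type*} [CommRing R] [IsDomain R] [CharZero R]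
    (W : PowerSeries R) (j : ℕ) :
    coeff (j+1) (W ^ (j+1)) = coeff j (W ^ j * derivative R W) := by
  have hD := Derivation.leibniz_pow (derivative R) W (j+1)
  have hD' : (derivative R) (W ^ (j+1)) = (j+1 : ℕ) • (W ^ j * (derivative R) W) := by
    rw [hD, Nat.add_sub_cancel]
    rw [smul_eq_mul]
  have h3 := congrArg (PowerSeries.coeff j) hD'
  rw [map_nsmul, PowerSeries.coeff_derivative] at h3
  have hcancel : ((j:R) + 1) ≠ 0 := Nat.cast_add_one_ne_zero j
  apply mul_left_cancel₀ hcancel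
  rw [mul_comm ((j:R)+1) _, h3, nsmul_eq_mul]
  push_cast
  ring

/-- step B : transfer through `map`. -/
lemma map_derivative {R S : Type*} [CommRing R] [CommRing S] (φ : R →+* S)
    (W : PowerSeries R) :
    PowerSeries.map φ (derivative R W) = derivative S (PowerSeries.map φ W) := by
  ext n
  rw [PowerSeries.coeff_map, PowerSeries.coeff_derivative, PowerSeries.coeff_derivative,
    PowerSeries.coeff_map, map_mul]
  simp only [map_add, map_one, map_natCast]

/-- the universal char-free identity. -/
lemma star {R : Type*} [CommRing R] (W : PowerSeries R) (j : ℕ) :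
    coeff (j+1) (W ^ (j+1)) = coeff j (W ^ j * derivative R W) := by
  -- universal power series over MvPolynomial ℕ ℤ
  set R₀ := MvPolynomial ℕ ℤ
  set W₀ : PowerSeries R₀ := PowerSeries.mk (fun i => MvPolynomial.X i) with hW₀
  -- the identity holds over R₀
  have huniv : coeff (j+1) (W₀ ^ (j+1)) = coeff j (W₀ ^ j * derivative R₀ W₀) := by
    set φ : R₀ →+* MvPolynomial ℕ ℚ := MvPolynomial.map (Int.castRingHom ℚ)
    have hφ : Function.Injective φ :=
      MvPolynomial.map_injective _ Int.cast_injective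
    apply hφ
    have := star_charzero (PowerSeries.map φ W₀) j
    rw [← map_pow, ← map_pow, ← map_derivative, ← map_mul, PowerSeries.coeff_map,
      PowerSeries.coeff_map] at this
    exact this
  -- specialize
  set ψ : R₀ →+* R := MvPolynomial.eval₂Hom (Int.castRingHom R) (fun i => coeff i W)
  have hmap : PowerSeries.map ψ W₀ = W := by
    ext i
    rw [PowerSeries.coeff_map, hW₀, PowerSeries.coeff_mk]
    exact MvPolynomial.eval₂Hom_X' (Int.castRingHom R) (fun i => coeff i W) i
  have h2 : coeff (j+1) ((PowerSeries.map ψ W₀) ^ (j+1))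
      = coeff j ((PowerSeries.map ψ W₀) ^ j * derivative R (PowerSeries.map ψ W₀)) := by
    rw [← map_pow, ← map_pow, ← map_derivative, ← map_mul, PowerSeries.coeff_map,
      PowerSeries.coeff_map, huniv]
  rw [hmap] at h2
  exact h2

end Star

end CommRing

section Field
variable {K : Type*} [Field K]


/-- The derivative of a Laurent series. -/
noncomputable def lder (h : LaurentSeries K) : LaurentSeries K :=
  HahnSeries.ofSuppBddBelow (fun n : ℤ => ((n + 1 : ℤ) : K) * h.coeff (n + 1))
    (HahnSeries.forallLTEqZero_supp_BddBelow _ (h.order - 1)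
      (fun _ h_lt => by
        rw [HahnSeries.coeff_eq_zero_of_lt_order <| lt_sub_iff_add_lt.mp h_lt, mul_zero]))

@[simp] lemma lder_coeff (h : LaurentSeries K) (n : ℤ) :
    (lder h).coeff n = ((n + 1 : ℤ) : K) * h.coeff (n + 1) := rfl

lemma lder_add (a b : LaurentSeries K) : lder (a + b) = lder a + lder b := by
  ext n
  simp [mul_add]

private lemma image_isPWO (a : LaurentSeries K) :
    ((fun t : ℤ => t - 1) '' a.support).IsPWO :=
  a.isPWO_support.image_of_monotoneOn (fun x _ y _ h => by omega)

private lemma lder_support_sub (a : LaurentSeries K) :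
    (lder a).support ⊆ (fun t : ℤ => t - 1) '' a.support := by
  intro j hj
  rw [HahnSeries.mem_support, lder_coeff] at hj
  have : a.coeff (j + 1) ≠ 0 := fun h => hj (by rw [h, mul_zero])
  exact ⟨j + 1, this, by ring⟩

lemma lder_mul (a b : LaurentSeries K) : lder (a * b) = lder a * b + a * lder b := by
  ext c
  rw [HahnSeries.coeff_add]
  have h1 : (lder a * b).coeff c =
      ∑ pq ∈ Finset.antidiagonal a.isPWO_support b.isPWO_support (c + 1),
        ((pq.1 : ℤ) : K) * (a.coeff pq.1 * b.coeff pq.2) := by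
    rw [HahnSeries.coeff_mul_left' (image_isPWO a) (lder_support_sub a)]
    refine Finset.sum_nbij' (fun ij => (ij.1 + 1, ij.2)) (fun pq => (pq.1 - 1, pq.2))
      ?_ ?_ ?_ ?_ ?_
    · rintro ⟨i, j⟩ hij
      simp only [Finset.mem_antidiagonal, Set.mem_image, HahnSeries.mem_support] at hij ⊢
      obtain ⟨⟨t, ht, hti⟩, hj, hsum⟩ := hij
      have hit : i + 1 = t := by omega
      exact ⟨by rwa [hit], hj, by omega⟩
    · rintro ⟨p, q⟩ hpq
      simp only [Finset.mem_antidiagonal, Set.mem_image, HahnSeries.mem_support] at hpq ⊢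
      exact ⟨⟨p, hpq.1, rfl⟩, hpq.2.1, by omega⟩
    · rintro ⟨i, j⟩ _; simp
    · rintro ⟨p, q⟩ _; simp
    · rintro ⟨i, j⟩ _
      dsimp only
      rw [lder_coeff]
      ring
  have h2 : (a * lder b).coeff c =
      ∑ pq ∈ Finset.antidiagonal a.isPWO_support b.isPWO_support (c + 1),
        ((pq.2 : ℤ) : K) * (a.coeff pq.1 * b.coeff pq.2) := by
    rw [HahnSeries.coeff_mul_right' (image_isPWO b) (lder_support_sub b)]
    refine Finset.sum_nbij' (fun ij => (ij.1, ij.2 + 1)) (fun pq => (pq.1, pq.2 - 1))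
      ?_ ?_ ?_ ?_ ?_
    · rintro ⟨i, j⟩ hij
      simp only [Finset.mem_antidiagonal, Set.mem_image, HahnSeries.mem_support] at hij ⊢
      obtain ⟨hi, ⟨t, ht, htj⟩, hsum⟩ := hij
      have hjt : j + 1 = t := by omega
      exact ⟨hi, by rwa [hjt], by omega⟩
    · rintro ⟨p, q⟩ hpq
      simp only [Finset.mem_antidiagonal, Set.mem_image, HahnSeries.mem_support] at hpq ⊢
      exact ⟨hpq.1, ⟨q, hpq.2.1, rfl⟩, by omega⟩
    · rintro ⟨i, j⟩ _; simp
    · rintro ⟨p, q⟩ _; simp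
    · rintro ⟨i, j⟩ _
      dsimp only
      rw [lder_coeff]
      ring
  rw [h1, h2, ← Finset.sum_add_distrib, lder_coeff, HahnSeries.coeff_mul, Finset.mul_sum]
  refine Finset.sum_congr rfl fun pq hpq => ?_
  rw [Finset.mem_antidiagonal] at hpq
  have : ((pq.1 : ℤ) : K) + ((pq.2 : ℤ) : K) = ((c + 1 : ℤ) : K) := by
    rw [← Int.cast_add, hpq.2.2]
  rw [← add_mul, this]

lemma lder_one : lder (1 : LaurentSeries K) = 0 := by
  ext n
  rw [lder_coeff]
  rcases eq_or_ne n (-1) with rfl | hn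
  · simp
  · rw [HahnSeries.coeff_one, if_neg (by omega), mul_zero, HahnSeries.coeff_zero]

lemma lder_inv (a : LaurentSeries K) (ha : a ≠ 0) :
    lder a⁻¹ = -(a⁻¹ * a⁻¹ * lder a) := by
  have h := lder_mul a a⁻¹
  rw [mul_inv_cancel₀ ha, lder_one] at h
  have h3 : a * lder a⁻¹ = -(lder a * a⁻¹) := by
    rw [add_comm] at h
    exact eq_neg_of_add_eq_zero_left h.symm
  calc lder a⁻¹ = a⁻¹ * (a * lder a⁻¹) := by rw [← mul_assoc, inv_mul_cancel₀ ha, one_mul]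
    _ = a⁻¹ * -(lder a * a⁻¹) := by rw [h3]
    _ = -(a⁻¹ * a⁻¹ * lder a) := by ring

lemma lder_pow_succ (a : LaurentSeries K) :
    ∀ n : ℕ, lder (a ^ (n + 1)) = (n + 1 : ℕ) • (a ^ n * lder a) := by
  intro n
  induction n with
  | zero => simp
  | succ n ih =>
    have h2 : a ^ (n + 2) = a ^ (n + 1) * a := by ring
    rw [h2, lder_mul, ih]
    simp only [nsmul_eq_mul]
    push_cast
    ring

lemma lder_zpow (a : LaurentSeries K) (ha : a ≠ 0) (k : ℤ) :
    lder (a ^ k) = k • (a ^ (k - 1) * lder a) := by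
  rcases k with n | n
  · rcases n with _ | n
    · simp [lder_one]
    · rw [Int.ofNat_eq_coe, zpow_natCast, lder_pow_succ, natCast_zsmul]
      push_cast
      congr 2
      rw [show ((n : ℤ) + 1 - 1) = (n : ℤ) by ring, zpow_natCast]
  · rw [zpow_negSucc, lder_inv _ (pow_ne_zero _ ha), lder_pow_succ]
    have hpow : ((a ^ (n + 1) : LaurentSeries K))⁻¹ * (a ^ (n + 1))⁻¹ * a ^ n
        = a ^ (Int.negSucc n - 1) := by
      rw [← zpow_natCast a (n+1), ← zpow_natCast a n, ← zpow_neg,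
        ← zpow_add₀ ha, ← zpow_add₀ ha]
      congr 1
      rw [Int.negSucc_eq]
      push_cast
      ring
    rw [nsmul_eq_mul, zsmul_eq_mul, ← hpow, Int.cast_negSucc]
    push_cast
    ring


/-- integer powers of `single 1 1`. -/
lemma xpow (m : ℤ) : (single (1:ℤ) (1:K) : LaurentSeries K) ^ m = single m 1 :=
  (RatFunc.single_zpow m).symm

lemma coeff_xpow_mul (m : ℤ) (h : LaurentSeries K) (j : ℤ) :
    ((single (1:ℤ) (1:K) : LaurentSeries K) ^ m * h).coeff j = h.coeff (j - m) := by
  rw [xpow]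
  have := HahnSeries.coeff_single_mul_add (r := (1:K)) (x := h) (a := j - m) (b := m)
  rw [sub_add_cancel] at this
  rw [this, one_mul]

lemma coeff_xpow (m j : ℤ) :
    ((single (1:ℤ) (1:K) : LaurentSeries K) ^ m).coeff j = if j = m then 1 else 0 := by
  rw [xpow, HahnSeries.coeff_single]
  split_ifs <;> rfl

lemma coeff_ofPS (P : PowerSeries K) (j : ℤ) :
    (HahnSeries.ofPowerSeries ℤ K P).coeff j
      = if j < 0 then 0 else coeff j.natAbs P :=
  PowerSeries.coeff_coe P j

lemma coeff_ofPS_neg (P : PowerSeries K) {j : ℤ} (hj : j < 0) :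
    (HahnSeries.ofPowerSeries ℤ K P).coeff j = 0 := by
  rw [coeff_ofPS, if_pos hj]

lemma coeff_ofPS_nonneg (P : PowerSeries K) (j : ℕ) :
    (HahnSeries.ofPowerSeries ℤ K P).coeff (j : ℤ) = coeff j P :=
  HahnSeries.ofPowerSeries_apply_coeff P j

lemma mul_coeff_vanish {a b : LaurentSeries K} {t N : ℤ}
    (ha : ∀ j ≤ N, a.coeff j = 0) (hb : ∀ j < t - N, b.coeff j = 0) :
    (a * b).coeff t = 0 := by
  rw [HahnSeries.coeff_mul]
  refine Finset.sum_eq_zero fun ij hij => ?_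
  rw [Finset.mem_antidiagonal] at hij
  by_cases h1 : ij.1 ≤ N
  · rw [ha ij.1 h1, zero_mul]
  · rw [hb ij.2 (by omega), mul_zero]

/-- nonneg-supported series: products. -/
lemma nonneg_mul {a b : LaurentSeries K} (ha : ∀ j < (0:ℤ), a.coeff j = 0)
    (hb : ∀ j < (0:ℤ), b.coeff j = 0) : ∀ j < (0:ℤ), (a * b).coeff j = 0 := by
  intro t ht
  exact mul_coeff_vanish (N := -1) (fun j hj => ha j (by omega)) (fun j hj => hb j (by omega))

lemma ofPS_unit_zpow (U : (PowerSeries K)ˣ) (m : ℤ) :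
    (HahnSeries.ofPowerSeries ℤ K (↑U : PowerSeries K)) ^ m
      = HahnSeries.ofPowerSeries ℤ K (↑(U ^ m) : PowerSeries K) := by
  set φ := (HahnSeries.ofPowerSeries ℤ K).toMonoidHom
  have h1 : ∀ V : (PowerSeries K)ˣ,
      HahnSeries.ofPowerSeries ℤ K (↑V : PowerSeries K) = ↑(Units.map φ V) := fun V => rfl
  rw [h1, h1, ← Units.val_zpow_eq_zpow_val]
  exact congrArg Units.val ((Units.map φ).map_zpow U m).symm

lemma sum_coeff {α : Type*} (s : Finset α) (f : α → LaurentSeries K) (j : ℤ) :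
    (∑ k ∈ s, f k).coeff j = ∑ k ∈ s, (f k).coeff j := by
  classical
  induction s using Finset.cons_induction with
  | empty => simp
  | cons a s ha ih => rw [Finset.sum_cons, Finset.sum_cons, HahnSeries.coeff_add, ih]

/-- unit part of a power series with zero constant coefficient. -/
lemma exists_unit_part {G : PowerSeries K} (hG0 : constantCoeff G = 0)
    (hG1 : coeff 1 G ≠ 0) :
    ∃ U : (PowerSeries K)ˣ, G = X * (↑U : PowerSeries K) ∧ constantCoeff (↑U : PowerSeries K) = coeff 1 G := by
  set Ug : PowerSeries K := PowerSeries.mk fun i => coeff (i+1) G with hUg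
  have hc : constantCoeff Ug = coeff 1 G := by
    rw [← PowerSeries.coeff_zero_eq_constantCoeff_apply, hUg, PowerSeries.coeff_mk]
  have hXU : G = X * Ug := by
    ext n
    rcases n with _ | n
    · rw [PowerSeries.coeff_zero_eq_constantCoeff_apply, hG0,
        PowerSeries.coeff_zero_eq_constantCoeff_apply, map_mul, PowerSeries.constantCoeff_X,
        zero_mul]
    · rw [PowerSeries.coeff_succ_X_mul, hUg, PowerSeries.coeff_mk]
  have hu : IsUnit Ug := by
    rw [PowerSeries.isUnit_iff_constantCoeff, hc]
    exact hG1.isUnit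
  refine ⟨hu.unit, ?_, ?_⟩
  · rw [IsUnit.unit_spec]
    exact hXU
  · rw [IsUnit.unit_spec]
    exact hc

lemma lder_x : lder (single (1:ℤ) (1:K) : LaurentSeries K) = 1 := by
  ext n
  rw [lder_coeff, HahnSeries.coeff_single, HahnSeries.coeff_one]
  rcases eq_or_ne n 0 with rfl | hn
  · simp
  · rw [if_neg hn, if_neg (by omega), mul_zero]

lemma lder_ofPS (P : PowerSeries K) :
    lder (HahnSeries.ofPowerSeries ℤ K P)
      = HahnSeries.ofPowerSeries ℤ K (PowerSeries.derivative K P) := by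
  ext n
  rw [lder_coeff, coeff_ofPS, coeff_ofPS]
  rcases lt_trichotomy n (-1) with h | h | h
  · rw [if_pos (by omega), if_pos (by omega), mul_zero]
  · subst h
    norm_num
  · have hn : ¬ n < 0 := by omega
    have hn1 : ¬ n + 1 < 0 := by omega
    rw [if_neg hn, if_neg hn1, PowerSeries.coeff_derivative]
    have hnat : (n+1).natAbs = n.natAbs + 1 := by omega
    rw [hnat, mul_comm]
    congr 1
    rw [show ((n + 1 : ℤ) : K) = ((n.natAbs + 1 : ℕ) : K) by
      rw [show (n + 1 : ℤ) = ((n.natAbs + 1 : ℕ) : ℤ) by omega, Int.cast_natCast]]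
    push_cast
    ring

lemma lder_nonneg {h : LaurentSeries K} (hh : ∀ j < (0:ℤ), h.coeff j = 0) :
    ∀ j < (0:ℤ), (lder h).coeff j = 0 := by
  intro j hj
  rw [lder_coeff]
  rcases eq_or_ne j (-1) with rfl | hne
  · norm_num
  · rw [hh (j+1) (by omega), mul_zero]


lemma csingle_mul_coeff (c : K) (y : LaurentSeries K) (j : ℤ) :
    (single (0:ℤ) c * y).coeff j = c * y.coeff j := by
  have h := HahnSeries.coeff_single_mul_add (r := c) (x := y) (a := j) (b := (0:ℤ))
  rw [add_zero] at h
  exact h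

lemma laurent_zsmul_mul (k : ℤ) (y z : LaurentSeries K) : (k • y) * z = k • (y * z) := by
  rw [zsmul_eq_mul, zsmul_eq_mul, mul_assoc]

lemma laurent_mul_zsmul (k : ℤ) (y z : LaurentSeries K) : y * (k • z) = k • (y * z) := by
  rw [zsmul_eq_mul, zsmul_eq_mul]
  ring

lemma zsmul_coeff (k : ℤ) (y : LaurentSeries K) (j : ℤ) :
    (k • y).coeff j = (k : K) * y.coeff j := by
  rw [zsmul_eq_mul]
  have h1 : ((k : ℤ) : LaurentSeries K) = HahnSeries.single (0:ℤ) ((k : K)) := by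
    rw [← HahnSeries.C_apply, ← map_intCast (HahnSeries.C : K →+* HahnSeries ℤ K)]
  rw [h1, csingle_mul_coeff]

end Field

end LagrangeAux

open LagrangeAux PowerSeries HahnSeries in
set_option maxHeartbeats 1000000 in
/-- Lagrange inversion in bracket form: if `F(z) = f₁z + f₂z² + ···` with `f₁ ≠ 0` and `G`
is its compositional inverse (`F(G(z)) = G(F(z)) = z`), then for all integers `m, n`:
`n·[z^n] G(z)^m = m·[z^{-m}] F(z)^{-n}`, powers being taken in the field of formal
Laurent series. -/
theorem lagrange_inversion_bracket {K : Type*} [Field K] (F G : PowerSeries K)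
    (hF0 : PowerSeries.constantCoeff F = 0) (hF1 : PowerSeries.coeff 1 F ≠ 0)
    (hG0 : PowerSeries.constantCoeff G = 0)
    (hFG : psComp F G = PowerSeries.X) (hGF : psComp G F = PowerSeries.X)
    (m n : ℤ) :
    (n : K) * ((HahnSeries.ofPowerSeries ℤ K G : LaurentSeries K) ^ m).coeff n
      = (m : K) * ((HahnSeries.ofPowerSeries ℤ K F : LaurentSeries K) ^ (-n)).coeff (-m) := by
  classical
  set x : LaurentSeries K := HahnSeries.single (1:ℤ) (1:K) with hxdef
  set f : LaurentSeries K := HahnSeries.ofPowerSeries ℤ K F with hfdef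
  set g : LaurentSeries K := HahnSeries.ofPowerSeries ℤ K G with hgdef
  -- the unit parts
  have g1f1 : PowerSeries.coeff 1 G * PowerSeries.coeff 1 F = 1 := by
    have h := congrArg (PowerSeries.coeff 1) hGF
    rw [psComp_coeff, PowerSeries.coeff_X, if_pos rfl, Finset.sum_range_succ,
      Finset.sum_range_one, pow_zero, pow_one, PowerSeries.coeff_one,
      if_neg one_ne_zero, mul_zero, zero_add] at h
    exact h
  have hG1 : PowerSeries.coeff 1 G ≠ 0 := left_ne_zero_of_mul_eq_one g1f1
  obtain ⟨Ug, hGXU, -⟩ := exists_unit_part hG0 hG1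
  set T : (PowerSeries K)ˣ := Units.map (psCompHom F hF0).toMonoidHom Ug with hTdef
  have hTm : ∀ k : ℤ, psComp (↑(Ug ^ k) : PowerSeries K) F = (↑(T ^ k) : PowerSeries K) := by
    intro k
    calc psComp (↑(Ug ^ k) : PowerSeries K) F
        = (↑(Units.map (psCompHom F hF0).toMonoidHom (Ug ^ k)) : PowerSeries K) := rfl
      _ = (↑(T ^ k) : PowerSeries K) := by
          rw [hTdef, ← MonoidHom.map_zpow (Units.map (psCompHom F hF0).toMonoidHom) Ug k]
  have hFT : F * (↑T : PowerSeries K) = PowerSeries.X := by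
    have hh : psComp (PowerSeries.X * (↑Ug : PowerSeries K)) F = PowerSeries.X := by
      rw [← hGXU]; exact hGF
    rw [psComp_mul hF0, psComp_X hF0] at hh
    exact hh
  have hTT : (↑T : PowerSeries K) * (↑(T⁻¹) : PowerSeries K) = 1 := Units.mul_inv T
  have hFX : F = PowerSeries.X * (↑(T⁻¹) : PowerSeries K) := by
    calc F = F * ((↑T : PowerSeries K) * (↑(T⁻¹) : PowerSeries K)) := by rw [hTT, mul_one]
      _ = (F * (↑T : PowerSeries K)) * (↑(T⁻¹) : PowerSeries K) := by ring
      _ = PowerSeries.X * (↑(T⁻¹) : PowerSeries K) := by rw [hFT]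
  -- Laurent series representations
  have hfx : f * HahnSeries.ofPowerSeries ℤ K (↑T : PowerSeries K) = x := by
    rw [hfdef, hxdef, ← ofPowerSeries_X (Γ := ℤ) (R := K), ← map_mul, hFT]
  have hfw : f = x * HahnSeries.ofPowerSeries ℤ K (↑(T⁻¹) : PowerSeries K) := by
    have h1 : HahnSeries.ofPowerSeries ℤ K (↑T : PowerSeries K)
        * HahnSeries.ofPowerSeries ℤ K (↑(T⁻¹) : PowerSeries K) = 1 := by
      rw [← map_mul, hTT, map_one]
    calc f = f * (HahnSeries.ofPowerSeries ℤ K (↑T : PowerSeries K)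
        * HahnSeries.ofPowerSeries ℤ K (↑(T⁻¹) : PowerSeries K)) := by rw [h1, mul_one]
      _ = (f * HahnSeries.ofPowerSeries ℤ K (↑T : PowerSeries K))
          * HahnSeries.ofPowerSeries ℤ K (↑(T⁻¹) : PowerSeries K) := by ring
      _ = x * HahnSeries.ofPowerSeries ℤ K (↑(T⁻¹) : PowerSeries K) := by rw [hfx]
  have hfrep : ∀ k : ℤ, f ^ k
      = x ^ k * HahnSeries.ofPowerSeries ℤ K (↑(T ^ (-k)) : PowerSeries K) := by
    intro k
    rw [hfw, mul_zpow, ofPS_unit_zpow]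
    congr 2
    rw [inv_zpow, ← zpow_neg]
  have hgrep : ∀ k : ℤ, g ^ k
      = x ^ k * HahnSeries.ofPowerSeries ℤ K (↑(Ug ^ k) : PowerSeries K) := by
    intro k
    rw [hgdef, hGXU, map_mul, ofPowerSeries_X, ← hxdef, mul_zpow, ofPS_unit_zpow]
  have hx0 : x ≠ 0 := by
    rw [hxdef]
    exact HahnSeries.single_ne_zero one_ne_zero
  have hf0 : f ≠ 0 := by
    have h1 : f.coeff ((1:ℕ) : ℤ) = PowerSeries.coeff 1 F := coeff_ofPS_nonneg F 1
    intro h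
    rw [h, HahnSeries.coeff_zero] at h1
    exact hF1 h1.symm
  have hfnn : ∀ j < (0:ℤ), f.coeff j = 0 := fun j hj => coeff_ofPS_neg F hj
  have hDfn : ∀ j < (0:ℤ), (lder f).coeff j = 0 := lder_nonneg hfnn
  -- the residue computation
  set t : LaurentSeries K := HahnSeries.ofPowerSeries ℤ K (↑T : PowerSeries K) with htdef
  set w : LaurentSeries K := HahnSeries.ofPowerSeries ℤ K (↑(T⁻¹) : PowerSeries K) with hwdef
  have hwt : w * t = 1 := by rw [hwdef, htdef, ← map_mul, Units.inv_mul, map_one]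
  have hw0 : w ≠ 0 := left_ne_zero_of_mul_eq_one hwt
  have ht0 : t ≠ 0 := right_ne_zero_of_mul_eq_one hwt
  have hwinv : w = t⁻¹ := eq_inv_of_mul_eq_one_left hwt
  have hwz : ∀ j : ℤ, w ^ j = HahnSeries.ofPowerSeries ℤ K (↑(T ^ (-j)) : PowerSeries K) := by
    intro j
    rw [hwdef, ofPS_unit_zpow, inv_zpow, ← zpow_neg]
  have hwnn : ∀ j < (0:ℤ), w.coeff j = 0 := by
    intro j hj; rw [hwdef]; exact coeff_ofPS_neg _ hj
  have hlwnn : ∀ j < (0:ℤ), (lder w).coeff j = 0 := lder_nonneg hwnn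
  have hwznn : ∀ (i : ℤ), ∀ j < (0:ℤ), (w ^ i).coeff j = 0 := by
    intro i j hj; rw [hwz i]; exact coeff_ofPS_neg _ hj
  have hDf : lder f = w + x * lder w := by
    rw [hfw, hxdef, lder_mul, lder_x, one_mul]
  have R1 : ∀ k : ℤ, (f ^ k * lder f).coeff (-1) = if k = -1 then 1 else 0 := by
    intro k
    have hsplit : f ^ k * lder f = x ^ k * (w ^ (k+1)) + x ^ (k+1) * (w ^ k * lder w) := by
      rw [hDf, hfw, mul_zpow, zpow_add_one₀ hx0, zpow_add_one₀ hw0]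
      ring
    rw [hsplit, HahnSeries.coeff_add, hxdef, coeff_xpow_mul, coeff_xpow_mul]
    rcases eq_or_ne k (-1) with rfl | hkne
    · rw [show (-1 : ℤ) + 1 = 0 by ring, show (-1 : ℤ) - (-1) = 0 by ring,
        show (-1 : ℤ) - 0 = -1 by ring, zpow_zero, HahnSeries.coeff_one, if_pos rfl,
        nonneg_mul (hwznn (-1)) hlwnn (-1) (by norm_num), if_pos rfl, add_zero]
    · rw [if_neg hkne]
      rcases le_or_gt 0 k with hk0 | hkneg
      · rw [hwz (k+1), coeff_ofPS_neg _ (by omega),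
          nonneg_mul (hwznn k) hlwnn _ (by omega), add_zero]
      · -- k ≤ -2
        set s : ℕ := (-2 - k).toNat with hs
        have h1 : (w ^ (k+1)).coeff (-1 - k)
            = PowerSeries.coeff (s+1) ((↑T : PowerSeries K) ^ (s+1)) := by
          rw [hwz (k+1), show -(k+1) = ((s+1 : ℕ) : ℤ) by omega, zpow_natCast,
            show (-1 - k) = ((s+1 : ℕ) : ℤ) by omega, coeff_ofPS_nonneg,
            Units.val_pow_eq_pow_val]
        have hlw : lder w = -(t⁻¹ * t⁻¹ * lder t) := by rw [hwinv]; exact lder_inv t ht0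
        have h2 : w ^ k * lder w = -(t ^ ((s : ℕ) : ℤ) * lder t) := by
          have hwk : w ^ k = t ^ (-k) := by rw [hwinv, inv_zpow, ← zpow_neg]
          rw [hlw, hwk, ← zpow_neg_one t,
            show t ^ (-k) * -(t ^ (-1:ℤ) * t ^ (-1:ℤ) * lder t)
              = -((t ^ (-k) * t ^ (-1:ℤ) * t ^ (-1:ℤ)) * lder t) by ring,
            ← zpow_add₀ ht0, ← zpow_add₀ ht0, show -k + -1 + -1 = ((s : ℕ) : ℤ) by omega]
        have h3 : (w ^ k * lder w).coeff (-1 - (k+1))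
            = -(PowerSeries.coeff s
                ((↑T : PowerSeries K) ^ s * PowerSeries.derivative K (↑T : PowerSeries K))) := by
          rw [h2, HahnSeries.coeff_neg]
          congr 1
          have htS : t ^ ((s : ℕ) : ℤ)
              = HahnSeries.ofPowerSeries ℤ K ((↑T : PowerSeries K) ^ s) := by
            rw [zpow_natCast, htdef, map_pow]
          have hlt : lder t
              = HahnSeries.ofPowerSeries ℤ K (PowerSeries.derivative K (↑T : PowerSeries K)) := by
            rw [htdef]; exact lder_ofPS _
          rw [htS, hlt, ← map_mul, show (-1 - (k+1)) = ((s : ℕ) : ℤ) by omega,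
            coeff_ofPS_nonneg]
        rw [h1, h3, star ((↑T : PowerSeries K)) s]
        ring
  -- finite composition identity
  have Cfin : ∀ m' j N : ℤ, j ≤ N →
      ∑ k ∈ Finset.Icc m' N, (g ^ m').coeff k * (f ^ k).coeff j
        = if j = m' then 1 else 0 := by
    intro m' j N hjN
    have hsh : ∑ k ∈ Finset.Icc m' N, (g ^ m').coeff k * (f ^ k).coeff j
        = ∑ k ∈ Finset.Icc m' j, (g ^ m').coeff k * (f ^ k).coeff j := by
      refine (Finset.sum_subset (Finset.Icc_subset_Icc_right hjN) ?_).symm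
      intro k hk hk2
      simp only [Finset.mem_Icc] at hk hk2
      rw [hfrep k, hxdef, coeff_xpow_mul, coeff_ofPS_neg _ (by omega), mul_zero]
    rw [hsh]
    rcases lt_or_ge j m' with hjm | hjm
    · rw [Finset.Icc_eq_empty (by omega), Finset.sum_empty, if_neg (by omega)]
    · set sN : ℕ := (j - m').toNat with hsN
      have hre : ∑ k ∈ Finset.Icc m' j, (g ^ m').coeff k * (f ^ k).coeff j
          = ∑ i ∈ Finset.range (sN + 1),
              PowerSeries.coeff i (↑(Ug ^ m') : PowerSeries K)
                * PowerSeries.coeff sN ((↑(T ^ (-m')) : PowerSeries K) * F ^ i) := by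
        refine Finset.sum_nbij' (fun k => (k - m').toNat) (fun i => m' + (i : ℤ)) ?_ ?_ ?_ ?_ ?_
        · intro k hk
          simp only [Finset.mem_Icc] at hk
          simp only [Finset.mem_range]
          omega
        · intro i hi
          simp only [Finset.mem_range] at hi
          simp only [Finset.mem_Icc]
          omega
        · intro k hk
          simp only [Finset.mem_Icc] at hk
          omega
        · intro i hi
          simp only [Finset.mem_range] at hi
          omega
        · intro k hk
          simp only [Finset.mem_Icc] at hk
          set i : ℕ := (k - m').toNat with hidef
          have hiS : i ≤ sN := by omega
          have hT2 : (↑(T ^ (-k)) : PowerSeries K)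
              = (↑(T ^ (-m')) : PowerSeries K) * ((↑(T⁻¹) : PowerSeries K)) ^ i := by
            rw [show (-k) = (-m') + (-(i:ℤ)) by omega, zpow_add, Units.val_mul]
            congr 1
            rw [show T ^ (-(i:ℤ)) = (T⁻¹) ^ (i:ℕ) by rw [zpow_neg, zpow_natCast, inv_pow],
              Units.val_pow_eq_pow_val]
          have h5 : PowerSeries.coeff (sN - i) ((↑(T ^ (-k)) : PowerSeries K))
              = PowerSeries.coeff sN ((↑(T ^ (-m')) : PowerSeries K) * F ^ i) := by
            calc PowerSeries.coeff (sN - i) ((↑(T ^ (-k)) : PowerSeries K))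
                = PowerSeries.coeff (sN - i)
                    ((↑(T ^ (-m')) : PowerSeries K) * ((↑(T⁻¹) : PowerSeries K)) ^ i) := by
                  rw [hT2]
              _ = PowerSeries.coeff ((sN - i) + i)
                    (PowerSeries.X ^ i
                      * ((↑(T ^ (-m')) : PowerSeries K) * ((↑(T⁻¹) : PowerSeries K)) ^ i)) :=
                  (PowerSeries.coeff_X_pow_mul _ i (sN - i)).symm
              _ = PowerSeries.coeff sN ((↑(T ^ (-m')) : PowerSeries K) * F ^ i) := by
                  rw [show (sN - i) + i = sN by omega, hFX, mul_pow]
                  congr 1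
                  ring
          rw [hgrep m', hfrep k, hxdef, coeff_xpow_mul, coeff_xpow_mul, coeff_ofPS, coeff_ofPS,
            if_neg (by omega), if_neg (by omega),
            show (k - m').natAbs = i by omega, show (j - k).natAbs = sN - i by omega, h5]
      rw [hre, ← coeff_mul_psComp hF0 ((↑(T ^ (-m')) : PowerSeries K))
        ((↑(Ug ^ m') : PowerSeries K)) sN, hTm m', ← Units.val_mul, ← zpow_add,
        show (-m') + m' = (0:ℤ) by ring, zpow_zero, Units.val_one, PowerSeries.coeff_one]
      rcases eq_or_ne j m' with rfl | hne
      · rw [if_pos rfl, if_pos (by omega)]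
      · rw [if_neg hne, if_neg (by omega)]
  -- assembly
  set B : LaurentSeries K := f ^ (-n-1) * lder f with hBdef
  set A : K := (x ^ m * B).coeff (-1) with hAdef
  have hBlow : ∀ q : ℤ, q < -n-1 → B.coeff q = 0 := by
    intro q hq
    rw [hBdef, hfrep (-n-1), hxdef, mul_assoc, coeff_xpow_mul]
    exact nonneg_mul (fun j hj => coeff_ofPS_neg _ hj) hDfn _ (by omega)
  have main1 : (g ^ m).coeff n = A := by
    set S : LaurentSeries K := ∑ k ∈ Finset.Icc m n,
      HahnSeries.single (0:ℤ) ((g ^ m).coeff k) * f ^ k with hSdef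
    have hresS : (S * B).coeff (-1) = (g ^ m).coeff n := by
      rw [hSdef, Finset.sum_mul, sum_coeff]
      have hterm : ∀ k ∈ Finset.Icc m n,
          (HahnSeries.single (0:ℤ) ((g ^ m).coeff k) * f ^ k * B).coeff (-1)
            = if k = n then (g ^ m).coeff k else 0 := by
        intro k hk
        rw [mul_assoc, csingle_mul_coeff]
        have hfkB : f ^ k * B = f ^ (k + (-n-1)) * lder f := by
          rw [hBdef, ← mul_assoc, ← zpow_add₀ hf0]
        rw [hfkB, R1]
        rcases eq_or_ne k n with rfl | hkn
        · rw [if_pos (by omega), if_pos rfl, mul_one]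
        · rw [if_neg (by omega), if_neg hkn, mul_zero]
      rw [Finset.sum_congr rfl hterm, Finset.sum_ite_eq' (Finset.Icc m n) n]
      rcases le_or_gt m n with hmn | hmn
      · rw [if_pos (Finset.mem_Icc.2 ⟨hmn, le_refl n⟩)]
      · rw [if_neg (by simp only [Finset.mem_Icc]; omega)]
        rw [hgrep m, hxdef, coeff_xpow_mul, coeff_ofPS_neg _ (by omega)]
    have hSc : ∀ j : ℤ, j ≤ n → (x ^ m - S).coeff j = 0 := by
      intro j hj
      rw [HahnSeries.coeff_sub, hSdef, sum_coeff]
      have heq : ∑ k ∈ Finset.Icc m n,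
          (HahnSeries.single (0:ℤ) ((g ^ m).coeff k) * f ^ k).coeff j
          = ∑ k ∈ Finset.Icc m n, (g ^ m).coeff k * (f ^ k).coeff j := by
        refine Finset.sum_congr rfl fun k _ => ?_
        rw [csingle_mul_coeff]
      rw [heq, Cfin m j n hj, hxdef, coeff_xpow]
      exact sub_self _
    have hAB : ((x ^ m - S) * B).coeff (-1) = 0 :=
      mul_coeff_vanish (N := n) hSc (fun q hq => hBlow q (by omega))
    have hxS : x ^ m * B = S * B + (x ^ m - S) * B := by ring
    rw [hAdef, hxS, HahnSeries.coeff_add, hresS, hAB, add_zero]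
  have main2 : (m : K) * (f ^ (-n)).coeff (-m) = (n : K) * A := by
    have h0 : (lder (x ^ m * f ^ (-n))).coeff (-1) = 0 := by
      rw [lder_coeff]
      norm_num
    have hL : lder (x ^ m * f ^ (-n))
        = m • (x ^ (m-1) * f ^ (-n)) + (-n) • (x ^ m * B) := by
      rw [lder_mul, lder_zpow x hx0 m, lder_zpow f hf0 (-n), hxdef, lder_x, mul_one, hBdef,
        laurent_zsmul_mul, laurent_mul_zsmul]
    rw [hL, HahnSeries.coeff_add, zsmul_coeff, zsmul_coeff, hxdef,
      coeff_xpow_mul, show (-1 : ℤ) - (m - 1) = -m by ring] at h0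
    rw [← hxdef, ← hAdef] at h0
    push_cast at h0
    linear_combination h0
  rw [main1, main2]
end

section
/- Constant-term vanishing in Lagrange's proof: if F(z) = f₁z + f₂z² + ··· with f₁ invertible, and k ≠ n are integers, then the coefficient of z^0 in F(z)^{k-1-n}·ϑF(z) is zero, where ϑF(z) = z·F'(z). -/
open PowerSeries

/-- Derivative of a power. -/
private lemma deriv_pow_smul {R : Type*} [CommRing R] (v : PowerSeries R) (c : ℕ) :
    PowerSeries.derivative R (v ^ (c + 1)) =
      (c + 1) • (v ^ c * PowerSeries.derivative R v) := by
  rw [Derivation.leibniz_pow]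
  simp [smul_eq_mul]

/-- The key universal identity over a char-zero domain, obtained by cancelling `c+1`. -/
private lemma key_coeff_charzero {R : Type*} [CommRing R] [IsDomain R] [CharZero R]
    (v : PowerSeries R) (c : ℕ) :
    PowerSeries.coeff (c + 1) (v ^ (c + 1)) =
      PowerSeries.coeff (c + 1) (v ^ c * (PowerSeries.X * PowerSeries.derivative R v)) := by
  have h2 : PowerSeries.coeff c (PowerSeries.derivative R (v ^ (c + 1))) =
      ((c : R) + 1) * PowerSeries.coeff (c + 1) (v ^ (c + 1)) := by
    rw [PowerSeries.coeff_derivative]; ring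
  rw [deriv_pow_smul, map_nsmul] at h2
  have h3 : PowerSeries.coeff (c + 1) (v ^ c * (PowerSeries.X * PowerSeries.derivative R v)) =
      PowerSeries.coeff c (v ^ c * PowerSeries.derivative R v) := by
    rw [show v ^ c * (PowerSeries.X * PowerSeries.derivative R v) =
        PowerSeries.X * (v ^ c * PowerSeries.derivative R v) by ring,
      PowerSeries.coeff_succ_X_mul]
  have hc1 : ((c : R) + 1) ≠ 0 := Nat.cast_add_one_ne_zero c
  apply mul_left_cancel₀ hc1
  rw [← h2, h3, nsmul_eq_mul]
  push_cast
  ring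

/-- The key universal identity over an arbitrary commutative ring, by base change from
`MvPolynomial ℕ ℤ`. -/
private lemma key_coeff {R : Type*} [CommRing R] (v : PowerSeries R) (c : ℕ) :
    PowerSeries.coeff (c + 1) (v ^ (c + 1)) =
      PowerSeries.coeff (c + 1) (v ^ c * (PowerSeries.X * PowerSeries.derivative R v)) := by
  let vU : PowerSeries (MvPolynomial ℕ ℤ) := PowerSeries.mk fun i => MvPolynomial.X i
  let φ : MvPolynomial ℕ ℤ →+* R := (MvPolynomial.aeval fun i => PowerSeries.coeff i v).toRingHom
  have hmap : PowerSeries.map φ vU = v := by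
    ext n
    rw [PowerSeries.coeff_map]
    show (MvPolynomial.aeval fun i => PowerSeries.coeff i v)
      (PowerSeries.coeff n (PowerSeries.mk fun i => MvPolynomial.X i)) = _
    rw [PowerSeries.coeff_mk, MvPolynomial.aeval_X]
  have hder : PowerSeries.map φ (PowerSeries.derivative (MvPolynomial ℕ ℤ) vU) =
      PowerSeries.derivative R (PowerSeries.map φ vU) := by
    ext n
    rw [PowerSeries.coeff_map, PowerSeries.coeff_derivative, PowerSeries.coeff_derivative,
      PowerSeries.coeff_map]
    push_cast [map_mul, map_natCast, map_add, map_one]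
    ring
  have h := congrArg φ (key_coeff_charzero vU c)
  rw [← PowerSeries.coeff_map, ← PowerSeries.coeff_map] at h
  have e1 : PowerSeries.map φ (vU ^ (c + 1)) = v ^ (c + 1) := by rw [map_pow, hmap]
  have e2 : PowerSeries.map φ (vU ^ c *
        (PowerSeries.X * PowerSeries.derivative (MvPolynomial ℕ ℤ) vU))
      = v ^ c * (PowerSeries.X * PowerSeries.derivative R v) := by
    rw [map_mul, map_mul, map_pow, PowerSeries.map_X, hder, hmap]
  rw [e1, e2] at h
  exact h

/-- Constant-term vanishing in Lagrange's proof: if `F(z) = f₁z + f₂z² + ···` with `f₁ ≠ 0`,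
and `k ≠ n` are integers, then the coefficient of `z^0` in `F(z)^{k-1-n}·ϑF(z)` is zero,
where `ϑF(z) = z·F'(z)` and the power is taken in the field of formal Laurent series. -/
theorem constant_term_vanishing {K : Type*} [Field K] (F : PowerSeries K)
    (hF0 : PowerSeries.constantCoeff F = 0) (hF1 : PowerSeries.coeff 1 F ≠ 0)
    (k n : ℤ) (hkn : k ≠ n) :
    (((HahnSeries.ofPowerSeries ℤ K F : LaurentSeries K) ^ (k - 1 - n))
        * (HahnSeries.ofPowerSeries ℤ K
            (PowerSeries.X * PowerSeries.derivative K F) : LaurentSeries K)).coeff 0 = 0 := by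
  set o := HahnSeries.ofPowerSeries ℤ K with ho
  set m : ℤ := k - 1 - n with hm
  have hm1 : m ≠ -1 := by omega
  rcases le_or_gt 0 m with hpos | hneg
  · -- nonnegative exponent: everything is a power series with zero constant term
    lift m to ℕ using hpos with M hM
    rw [zpow_natCast, ← map_pow, ← map_mul]
    have h0 : ((0 : ℤ) = ((0 : ℕ) : ℤ)) := by norm_num
    rw [h0, HahnSeries.ofPowerSeries_apply_coeff]
    rw [PowerSeries.coeff_zero_eq_constantCoeff, map_mul, map_mul,
      PowerSeries.constantCoeff_X, zero_mul, mul_zero]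
  · -- negative exponent: m ≤ -2
    have hm2 : m ≤ -2 := by omega
    obtain ⟨c, hc⟩ : ∃ c : ℕ, m = -((c : ℤ) + 2) := ⟨(-m - 2).toNat, by omega⟩
    -- write F = X * u with u a unit
    obtain ⟨u, hFXu⟩ : (PowerSeries.X : PowerSeries K) ∣ F :=
      PowerSeries.X_dvd_iff.mpr hF0
    have hu0 : PowerSeries.constantCoeff u ≠ 0 := by
      intro h
      apply hF1
      have : PowerSeries.coeff 1 F = PowerSeries.coeff 0 u := by
        rw [hFXu]
        exact PowerSeries.coeff_succ_X_mul 0 u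
      rw [this, PowerSeries.coeff_zero_eq_constantCoeff, h]
    have huu : IsUnit u :=
      PowerSeries.isUnit_iff_constantCoeff.mpr (isUnit_iff_ne_zero.mpr hu0)
    obtain ⟨U, hU⟩ := huu
    set v : PowerSeries K := (↑U⁻¹ : PowerSeries K) with hv
    have huv : u * v = 1 := by rw [← hU, hv]; exact_mod_cast U.mul_inv
    -- derivative identities
    have hdF : PowerSeries.derivative K F = u + PowerSeries.X * PowerSeries.derivative K u := by
      rw [hFXu, Derivation.leibniz, PowerSeries.derivative_X, smul_eq_mul, smul_eq_mul, mul_one]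
      ring
    have hvdu : v * PowerSeries.derivative K u = -(u * PowerSeries.derivative K v) := by
      have h := congrArg (PowerSeries.derivative K) huv
      rw [Derivation.leibniz, smul_eq_mul, smul_eq_mul, Derivation.map_one_eq_zero] at h
      linear_combination h
    -- key power series computation
    set W : PowerSeries K :=
      v ^ (c + 1) - v ^ c * (PowerSeries.X * PowerSeries.derivative K v) with hW
    have h1 : v ^ (c + 2) * u = v ^ (c + 1) := by
      rw [pow_succ, mul_assoc, mul_comm v u, huv, mul_one]
    have h1' : v ^ (c + 1) * u = v ^ c := by
      rw [pow_succ, mul_assoc, mul_comm v u, huv, mul_one]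
    have h2 : v ^ (c + 2) * PowerSeries.derivative K u
        = -(v ^ c * PowerSeries.derivative K v) := by
      have : v ^ (c + 2) * PowerSeries.derivative K u
          = v ^ (c + 1) * (v * PowerSeries.derivative K u) := by ring
      rw [this, hvdu]
      have : v ^ (c + 1) * -(u * PowerSeries.derivative K v)
          = -((v ^ (c + 1) * u) * PowerSeries.derivative K v) := by ring
      rw [this, h1']
    have hP : v ^ (c + 2) * (PowerSeries.X * PowerSeries.derivative K F)
        = PowerSeries.X * W := by
      rw [hdF, hW]
      linear_combination (PowerSeries.X * PowerSeries.X : PowerSeries K) * h2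
        + (PowerSeries.X : PowerSeries K) * h1
    -- Laurent series side
    have hmnat : m = -((c + 2 : ℕ) : ℤ) := by push_cast; omega
    have hoFpow : (o F) ^ ((c + 2 : ℕ) : ℤ)
        = HahnSeries.single ((c + 2 : ℕ) • (1 : ℤ)) (1 : K) ^ 1 * o (u ^ (c + 2)) := by
      rw [zpow_natCast, hFXu, map_mul, HahnSeries.ofPowerSeries_X, mul_pow, map_pow,
        HahnSeries.single_pow, one_pow, pow_one]
    have hunit : ((o F) ^ ((c + 2 : ℕ) : ℤ))
        * (HahnSeries.single (-((c + 2 : ℕ) : ℤ)) (1 : K) * o (v ^ (c + 2))) = 1 := by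
      rw [hoFpow, pow_one]
      calc HahnSeries.single ((c + 2 : ℕ) • (1 : ℤ)) (1 : K) * o (u ^ (c + 2)) *
            (HahnSeries.single (-((c + 2 : ℕ) : ℤ)) (1 : K) * o (v ^ (c + 2)))
          = (HahnSeries.single ((c + 2 : ℕ) • (1 : ℤ)) (1 : K) *
              HahnSeries.single (-((c + 2 : ℕ) : ℤ)) (1 : K)) *
            (o (u ^ (c + 2)) * o (v ^ (c + 2))) := by ring
        _ = 1 := by
            rw [HahnSeries.single_mul_single, ← map_mul, ← mul_pow, huv, one_pow, map_one,
              mul_one, one_mul]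
            have : ((c + 2 : ℕ) • (1 : ℤ)) + (-((c + 2 : ℕ) : ℤ)) = 0 := by
              push_cast [nsmul_eq_mul]; ring
            rw [this]
            exact HahnSeries.single_zero_one
    have hinv : (o F : LaurentSeries K) ^ m
        = HahnSeries.single (-((c + 2 : ℕ) : ℤ)) (1 : K) * o (v ^ (c + 2)) := by
      rw [hmnat, zpow_neg]
      exact inv_eq_of_mul_eq_one_right hunit
    rw [hinv, mul_assoc, ← map_mul, hP, map_mul, HahnSeries.ofPowerSeries_X, ← mul_assoc,
      HahnSeries.single_mul_single, one_mul]
    have hidx : (-((c + 2 : ℕ) : ℤ) + 1) = -((c : ℤ) + 1) := by push_cast; ring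
    rw [hidx]
    have h0 : (0 : ℤ) = ((c + 1 : ℕ) : ℤ) + -((c : ℤ) + 1) := by push_cast; ring
    rw [h0, HahnSeries.coeff_single_mul_add, one_mul, HahnSeries.ofPowerSeries_apply_coeff]
    rw [hW, map_sub, key_coeff, sub_self]
end

section
/- Truncated product expansion: for any finite set C, nonnegative integer n, and elements x_c indexed by c ∈ C in a commutative ring, the sum over k < n of the coefficient of z^k in ∏_{c∈C}(1 + z·x_c) equals Σ_{B ⊆ C, |B| < n} ∏_{c∈B} x_c. Consequently, with x_c = e^{p(c)t} - 1, [z^n/(z-1)] ∏_{c∈C}(1 + z(e^{p(c)t}-1)) = Σ_{A ⊆ C, |A| < n} (-1)^{n-1-|A|} C(|C|-|A|-1, |C|-n)·e^{p(A)t}, where p(A) = Σ_{a∈A} p(a) and [z^n/(z-1)] G denotes g_{n-1} + g_{n-2} + ··· + g_0 for G = Σ g_k z^k. -/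
open Polynomial

lemma aux_prod_expand {α : Type*} [DecidableEq α] {R : Type*} [CommRing R]
    (C : Finset α) (n : ℕ) (x : α → R) :
    ∑ k ∈ Finset.range n, (∏ c ∈ C, (1 + Polynomial.C (x c) * Polynomial.X)).coeff k
      = ∑ B ∈ C.powerset.filter (fun B => B.card < n), ∏ c ∈ B, x c := by
  have hprod : ∏ c ∈ C, (1 + Polynomial.C (x c) * Polynomial.X)
      = ∑ B ∈ C.powerset, Polynomial.C (∏ c ∈ B, x c) * Polynomial.X ^ B.card := by
    have h1 : ∀ c ∈ C, (1 + Polynomial.C (x c) * Polynomial.X)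
        = (Polynomial.C (x c) * Polynomial.X + 1) := fun _ _ => add_comm _ _
    rw [Finset.prod_congr rfl h1, Finset.prod_add]
    refine Finset.sum_congr rfl fun B _ => ?_
    rw [Finset.prod_const_one, mul_one, Finset.prod_mul_distrib, Finset.prod_const,
      ← map_prod]
  rw [hprod]
  simp only [Polynomial.finset_sum_coeff, Polynomial.coeff_C_mul, Polynomial.coeff_X_pow,
    mul_ite, mul_one, mul_zero]
  rw [Finset.sum_comm]
  simp [Finset.sum_ite_eq', Finset.mem_range, Finset.sum_filter]

lemma aux_alt (N : ℕ) (hN : 1 ≤ N) (k : ℕ) :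
    ∑ j ∈ Finset.range (k + 1), (-1 : ℝ) ^ j * (N.choose j : ℕ)
      = (-1) ^ k * (((N - 1).choose k : ℕ) : ℝ) := by
  induction k with
  | zero => simp
  | succ k ih =>
    rw [Finset.sum_range_succ, ih]
    have hp : N.choose (k + 1) = (N - 1).choose k + (N - 1).choose (k + 1) := by
      conv_lhs => rw [← Nat.succ_pred_eq_of_pos hN]
      exact Nat.choose_succ_succ _ _
    rw [hp]
    push_cast
    ring

lemma aux_count {α : Type*} [DecidableEq α] (S : Finset α) (K : ℕ)
    (hK : K ≤ S.card) (hK1 : 1 ≤ K) :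
    ∑ D ∈ S.powerset.filter (fun D => D.card < K), (-1 : ℝ) ^ D.card
      = (-1) ^ (K - 1) * (((S.card - 1).choose (K - 1) : ℕ) : ℝ) := by
  rw [Finset.sum_filter, Finset.sum_powerset]
  have h1 : ∀ j ∈ Finset.range (S.card + 1),
      (∑ D ∈ Finset.powersetCard j S, if D.card < K then (-1 : ℝ) ^ D.card else 0)
        = (if j < K then (-1 : ℝ) ^ j * (S.card.choose j : ℕ) else 0) := by
    intro j _
    have h2 : ∀ D ∈ Finset.powersetCard j S,
        (if D.card < K then (-1 : ℝ) ^ D.card else 0) = (if j < K then (-1 : ℝ) ^ j else 0) := by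
      intro D hD
      rw [(Finset.mem_powersetCard.mp hD).2]
    rw [Finset.sum_congr rfl h2, Finset.sum_const, Finset.card_powersetCard, nsmul_eq_mul]
    split <;> simp [mul_comm]
  rw [Finset.sum_congr rfl h1, ← Finset.sum_filter]
  have h3 : (Finset.range (S.card + 1)).filter (fun j => j < K) = Finset.range K := by
    ext j
    simp only [Finset.mem_filter, Finset.mem_range]
    omega
  rw [h3]
  have hK' : K - 1 + 1 = K := by omega
  rw [← hK']
  exact aux_alt S.card (le_trans hK1 hK) (K - 1)

/-- Truncated product expansion and its application to the coupon collector's problem.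
First part: for any finite set `C`, `n`, and elements `x_c` in a commutative ring,
`Σ_{k<n} [z^k] ∏_{c∈C}(1 + z·x_c) = Σ_{B ⊆ C, |B| < n} ∏_{c∈B} x_c`.
Second part: with `x_c = e^{p(c)t} - 1`,
`[zⁿ/(z-1)] ∏_{c∈C}(1 + z(e^{p(c)t}-1))
  = Σ_{A ⊆ C, |A| < n} (-1)^{n-1-|A|} C(|C|-|A|-1, |C|-n)·e^{p(A)t}`,
where `[zⁿ/(z-1)] G = g_{n-1} + g_{n-2} + ··· + g₀` and `p(A) = Σ_{a∈A} p(a)`. -/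
theorem truncated_product_expansion {α : Type*} (C : Finset α) (n : ℕ)
    (p : α → ℝ) (t : ℝ) (hn : 0 < n) (hnC : n ≤ C.card) :
    (∀ (R : Type) (_ : CommRing R) (x : α → R),
      ∑ k ∈ Finset.range n, (∏ c ∈ C, (1 + Polynomial.C (x c) * Polynomial.X)).coeff k
        = ∑ B ∈ C.powerset.filter (fun B => B.card < n), ∏ c ∈ B, x c)
    ∧ ∑ k ∈ Finset.range n,
        (∏ c ∈ C, (1 + Polynomial.C (Real.exp (p c * t) - 1) * Polynomial.X)).coeff k
      = ∑ A ∈ C.powerset.filter (fun A => A.card < n),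
          (-1 : ℝ) ^ (n - 1 - A.card) * ((C.card - A.card - 1).choose (C.card - n))
            * Real.exp ((∑ a ∈ A, p a) * t) := by
  classical
  constructor
  · intro R iR x
    letI := iR
    exact aux_prod_expand C n x
  rw [aux_prod_expand C n (fun c => Real.exp (p c * t) - 1)]
  have hB : ∀ B ∈ C.powerset.filter (fun B => B.card < n),
      ∏ c ∈ B, (Real.exp (p c * t) - 1)
        = ∑ A ∈ B.powerset, (-1 : ℝ) ^ (B.card - A.card) * Real.exp ((∑ a ∈ A, p a) * t) := by
    intro B _
    have h1 : ∀ c ∈ B, Real.exp (p c * t) - 1 = Real.exp (p c * t) + (-1) := fun _ _ => by ring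
    rw [Finset.prod_congr rfl h1, Finset.prod_add]
    refine Finset.sum_congr rfl fun A hA => ?_
    rw [Finset.prod_const, Finset.card_sdiff_of_subset (Finset.mem_powerset.mp hA), ← Real.exp_sum,
      ← Finset.sum_mul]
    ring
  rw [Finset.sum_congr rfl hB]
  have hswap : ∀ (B A : Finset α),
      B ∈ C.powerset.filter (fun B => B.card < n) ∧ A ∈ B.powerset
        ↔ B ∈ ((C.powerset.filter (fun B => B.card < n)).filter (fun B => A ⊆ B))
            ∧ A ∈ C.powerset.filter (fun A => A.card < n) := by
    intro B A
    simp only [Finset.mem_filter, Finset.mem_powerset]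
    constructor
    · rintro ⟨⟨h1, h2⟩, h3⟩
      exact ⟨⟨⟨h1, h2⟩, h3⟩, h3.trans h1, lt_of_le_of_lt (Finset.card_le_card h3) h2⟩
    · rintro ⟨⟨h, h3⟩, _⟩
      exact ⟨h, h3⟩
  rw [Finset.sum_comm' hswap]
  refine Finset.sum_congr rfl fun A hA => ?_
  obtain ⟨hAC, hAn⟩ := Finset.mem_filter.mp hA
  have hAC' : A ⊆ C := Finset.mem_powerset.mp hAC
  have haC : A.card ≤ C.card := Finset.card_le_card hAC'
  set E := Real.exp ((∑ a ∈ A, p a) * t) with hE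
  have hbij : ∑ B ∈ ((C.powerset.filter (fun B => B.card < n)).filter (fun B => A ⊆ B)),
      (-1 : ℝ) ^ (B.card - A.card) * E
        = ∑ D ∈ (C \ A).powerset.filter (fun D => D.card < n - A.card),
            (-1 : ℝ) ^ D.card * E := by
    refine Finset.sum_nbij' (fun B => B \ A) (fun D => A ∪ D) ?_ ?_ ?_ ?_ ?_
    · intro B hBm
      simp only [Finset.mem_filter, Finset.mem_powerset] at hBm ⊢
      obtain ⟨⟨h1, h2⟩, h3⟩ := hBm
      have hc : (B \ A).card = B.card - A.card := Finset.card_sdiff_of_subset h3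
      have hle : A.card ≤ B.card := Finset.card_le_card h3
      constructor
      · intro x hx
        simp only [Finset.mem_sdiff] at hx ⊢
        exact ⟨h1 hx.1, hx.2⟩
      · omega
    · intro D hDm
      simp only [Finset.mem_filter, Finset.mem_powerset] at hDm ⊢
      obtain ⟨h1, h2⟩ := hDm
      have hdisj : Disjoint A D := by
        rw [Finset.disjoint_left]
        intro a ha haD
        exact (Finset.mem_sdiff.mp (h1 haD)).2 ha
      have hDC : D ⊆ C := h1.trans (Finset.sdiff_subset)
      have hcard : (A ∪ D).card = A.card + D.card := Finset.card_union_of_disjoint hdisj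
      exact ⟨⟨Finset.union_subset hAC' hDC, by omega⟩, Finset.subset_union_left⟩
    · intro B hBm
      simp only [Finset.mem_filter, Finset.mem_powerset] at hBm
      exact Finset.union_sdiff_of_subset hBm.2
    · intro D hDm
      simp only [Finset.mem_filter, Finset.mem_powerset] at hDm
      have hdisj : Disjoint A D := by
        rw [Finset.disjoint_left]
        intro a ha haD
        exact (Finset.mem_sdiff.mp (hDm.1 haD)).2 ha
      exact Finset.union_sdiff_cancel_left hdisj
    · intro B hBm
      simp only [Finset.mem_filter, Finset.mem_powerset] at hBm
      rw [Finset.card_sdiff_of_subset hBm.2]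
  rw [← Finset.sum_mul] at hbij
  rw [← Finset.sum_mul, hbij, ← Finset.sum_mul, aux_count (C \ A) (n - A.card) (by rw [Finset.card_sdiff_of_subset hAC']; omega) (by omega)]
  rw [Finset.card_sdiff_of_subset hAC']
  have e1 : n - A.card - 1 = n - 1 - A.card := by omega
  have e2 : (C.card - A.card - 1).choose (C.card - n)
      = (C.card - A.card - 1).choose (n - 1 - A.card) := by
    have h := Nat.choose_symm (n := C.card - A.card - 1) (k := C.card - n) (by omega)
    rw [← h]
    congr 1
    omega
  rw [e1, e2]
end
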